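/- arXiv:1907.03808 — 4 statements merged into one kernel-verified Lean document; each statement's English description precedes it below -/
import Mathlib

section
/- Let p₁, …, p_N be random variables taking values in {1/2, 1}, where the null indices form a set H₀, the variables (p_l)_{l ∈ H₀} are i.i.d. with P(p_l = 1/2) = P(p_l = 1) = 1/2, and they are independent of (p_l)_{l ∉ H₀}. For q ∈ [0,1] and a subset K ⊆ {1,…,N}, define k̂ = max{k ∈ K : #{l ≤ k : p_l > 1/2} / max(#{l ≤ k : p_l ≤ 1/2}, 1) ≤ q} (with k̂ = 0 if the set is empty), V = #{l ≤ k̂ : l ∈ H₀ and p_l ≤ 1/2}, and R = #{l ≤ k̂ : p_l ≤ 1/2}. Then E[V / (R + q⁻¹)] ≤ q. -/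
open scoped Classical
open scoped ENNReal
open MeasureTheory ProbabilityTheory Finset

namespace SSTaux

/-- knockoff martingale value at "time" `t` for bit-set `s` within null index set `E`. -/
noncomputable def Mg (E : Finset ℕ) (t : ℕ) (s : Finset ℕ) : ℝ :=
  ((s ∩ range t).card : ℝ) / (1 + ((E \ s) ∩ range t).card)

lemma Mg_nonneg (E : Finset ℕ) (t : ℕ) (s : Finset ℕ) : 0 ≤ Mg E t s :=
  div_nonneg (by positivity) (by positivity)

lemma Mg_eq_of_ge {E s : Finset ℕ} {t t' : ℕ} (hs : s ⊆ E)
    (h : ∀ x ∈ E, x < t) (h' : ∀ x ∈ E, x < t') : Mg E t s = Mg E t' s := by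
  have h1 : ∀ u : Finset ℕ, u ⊆ E → u ∩ range t = u ∩ range t' := by
    intro u hu
    have : u ∩ range t = u := inter_eq_left.2 fun x hx => mem_range.2 (h x (hu hx))
    have h2 : u ∩ range t' = u := inter_eq_left.2 fun x hx => mem_range.2 (h' x (hu hx))
    rw [this, h2]
  rw [Mg, Mg, h1 s hs, h1 (E \ s) (sdiff_subset)]

lemma Mg_lower {E s : Finset ℕ} {a t : ℕ} (hs : s ⊆ E) (ht : t ≤ a) :
    Mg E t s = Mg (E.erase a) t (s.erase a) := by
  have hne : ∀ x : ℕ, x ∈ range t → x ≠ a := by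
    intro x hx
    exact Nat.ne_of_lt (lt_of_lt_of_le (mem_range.1 hx) ht)
  have h1 : s ∩ range t = s.erase a ∩ range t := by
    ext x
    simp only [mem_inter, mem_erase]
    constructor
    · rintro ⟨hxs, hxr⟩; exact ⟨⟨hne x hxr, hxs⟩, hxr⟩
    · rintro ⟨⟨_, hxs⟩, hxr⟩; exact ⟨hxs, hxr⟩
  have h2 : (E \ s) ∩ range t = (E.erase a \ s.erase a) ∩ range t := by
    ext x
    simp only [mem_inter, mem_sdiff, mem_erase]
    constructor
    · rintro ⟨⟨hxE, hxs⟩, hxr⟩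
      exact ⟨⟨⟨hne x hxr, hxE⟩, fun h => hxs h.2⟩, hxr⟩
    · rintro ⟨⟨⟨hxa, hxE⟩, hxs⟩, hxr⟩
      refine ⟨⟨hxE, fun h => hxs ⟨hxa, h⟩⟩, hxr⟩
  rw [Mg, Mg, h1, h2]

lemma Mg_empty (E : Finset ℕ) (t : ℕ) : Mg E t ∅ = 0 := by
  simp [Mg]

end SSTaux

namespace SSTaux

lemma count_step (E : Finset ℕ) (hE : E.Nonempty) (T : ℕ) (hT : ∀ x ∈ E, x < T) (v : ℕ) :
    ∑ u ∈ Finset.powersetCard v E, (Mg E T u - Mg E (E.max' hE) u)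
      = if v = E.card then 1 else 0 := by
  set a := E.max' hE with ha
  set n := E.card with hn
  have haE : a ∈ E := E.max'_mem hE
  have hn1 : 1 ≤ n := Finset.card_pos.2 hE
  have hlt : ∀ x ∈ E.erase a, x < a := by
    intro x hx
    rcases mem_erase.1 hx with ⟨hxa, hxE⟩
    exact lt_of_le_of_ne (E.le_max' x hxE) hxa
  have hE'card : (E.erase a).card = n - 1 := by rw [card_erase_of_mem haE]
  -- value of Mg E T u for u ⊆ E of card v
  have hMgT : ∀ u : Finset ℕ, u ⊆ E → Mg E T u = (u.card : ℝ) / (1 + (E.card - u.card : ℕ)) := by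
    intro u hu
    have h1 : u ∩ range T = u := inter_eq_left.2 fun x hx => mem_range.2 (hT x (hu hx))
    have h2 : (E \ u) ∩ range T = E \ u :=
      inter_eq_left.2 fun x hx => mem_range.2 (hT x ((sdiff_subset) hx))
    rw [Mg, h1, h2, card_sdiff_of_subset hu]
  -- value of Mg E a u for u ⊆ E.erase a
  have hMgA0 : ∀ u : Finset ℕ, u ⊆ E.erase a →
      Mg E a u = (u.card : ℝ) / (1 + ((E.erase a).card - u.card : ℕ)) := by
    intro u hu
    have h1 : u ∩ range a = u := inter_eq_left.2 fun x hx => mem_range.2 (hlt x (hu hx))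
    have h2 : (E \ u) ∩ range a = E.erase a \ u := by
      ext x
      simp only [mem_inter, mem_sdiff, mem_range, mem_erase]
      constructor
      · rintro ⟨⟨hxE, hxu⟩, hxr⟩
        exact ⟨⟨Nat.ne_of_lt hxr, hxE⟩, hxu⟩
      · rintro ⟨⟨hxa, hxE⟩, hxu⟩
        exact ⟨⟨hxE, hxu⟩, lt_of_le_of_ne (E.le_max' x hxE) hxa⟩
    rw [Mg, h1, h2, card_sdiff_of_subset hu]
  -- value of Mg E a (insert a u) for u ⊆ E.erase a
  have hMgA1 : ∀ u : Finset ℕ, u ⊆ E.erase a →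
      Mg E a (insert a u) = (u.card : ℝ) / (1 + ((E.erase a).card - u.card : ℕ)) := by
    intro u hu
    have hau : a ∉ u := fun h => (mem_erase.1 (hu h)).1 rfl
    have h1 : insert a u ∩ range a = u := by
      ext x
      simp only [mem_inter, mem_insert, mem_range]
      constructor
      · rintro ⟨hx | hx, hxr⟩
        · exact absurd hxr (by omega)
        · exact hx
      · intro hx; exact ⟨Or.inr hx, hlt x (hu hx)⟩
    have h2 : (E \ insert a u) ∩ range a = E.erase a \ u := by
      ext x
      simp only [mem_inter, mem_sdiff, mem_insert, mem_range, mem_erase]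
      constructor
      · rintro ⟨⟨hxE, hxu⟩, hxr⟩
        exact ⟨⟨Nat.ne_of_lt hxr, hxE⟩, fun h => hxu (Or.inr h)⟩
      · rintro ⟨⟨hxa, hxE⟩, hxu⟩
        exact ⟨⟨hxE, fun h => h.elim hxa hxu⟩, lt_of_le_of_ne (E.le_max' x hxE) hxa⟩
    rw [Mg, h1, h2, card_sdiff_of_subset hu]
  rcases Nat.eq_zero_or_pos v with hv0 | hv1
  · subst hv0
    rw [powersetCard_zero, sum_singleton, Mg_empty, Mg_empty]
    have : ¬ (0 = n) := by omega
    simp [this]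
  -- v ≥ 1
  obtain ⟨w, rfl⟩ : ∃ w, v = w + 1 := ⟨v - 1, by omega⟩
  have haE' : a ∉ E.erase a := notMem_erase a E
  have hEins : E = insert a (E.erase a) := (insert_erase haE).symm
  have hps : Finset.powersetCard (w+1) E =
      Finset.powersetCard (w+1) (E.erase a) ∪
        (Finset.powersetCard w (E.erase a)).image (insert a) := by
    conv_lhs => rw [hEins]
    exact powersetCard_succ_insert haE' w
  have hdisj : Disjoint (Finset.powersetCard (w+1) (E.erase a))
      ((Finset.powersetCard w (E.erase a)).image (insert a)) := by
    rw [disjoint_left]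
    intro u hu hu'
    rcases mem_image.1 hu' with ⟨t, _, rfl⟩
    exact (mem_erase.1 ((mem_powersetCard.1 hu).1 (mem_insert_self a t))).1 rfl
  have hinj : ∀ x ∈ Finset.powersetCard w (E.erase a), ∀ y ∈ Finset.powersetCard w (E.erase a),
      insert a x = insert a y → x = y := by
    intro x hx y hy hxy
    have hax : a ∉ x := fun h => (mem_erase.1 ((mem_powersetCard.1 hx).1 h)).1 rfl
    have hay : a ∉ y := fun h => (mem_erase.1 ((mem_powersetCard.1 hy).1 h)).1 rfl
    rw [← erase_insert hax, hxy, erase_insert hay]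
  rw [hps, sum_union hdisj, sum_image hinj]
  -- rewrite each sum as constant sums
  have hsum1 : ∑ u ∈ Finset.powersetCard (w+1) (E.erase a), (Mg E T u - Mg E a u)
      = ((n-1).choose (w+1) : ℝ) *
        (((w+1 : ℕ) : ℝ) / (1 + ((n - (w+1) : ℕ) : ℝ)) -
         ((w+1 : ℕ) : ℝ) / (1 + (((n-1) - (w+1) : ℕ) : ℝ))) := by
    rw [sum_congr rfl, sum_const, card_powersetCard, hE'card, nsmul_eq_mul]
    intro u hu
    rcases mem_powersetCard.1 hu with ⟨huE', hucard⟩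
    have huE : u ⊆ E := huE'.trans (erase_subset a E)
    rw [hMgT u huE, hMgA0 u huE', hucard, hE'card, hn]
  have hsum2 : ∑ t ∈ Finset.powersetCard w (E.erase a), (Mg E T (insert a t) - Mg E a (insert a t))
      = ((n-1).choose w : ℝ) *
        (((w+1 : ℕ) : ℝ) / (1 + ((n - (w+1) : ℕ) : ℝ)) -
         ((w : ℕ) : ℝ) / (1 + (((n-1) - w : ℕ) : ℝ))) := by
    rw [sum_congr rfl, sum_const, card_powersetCard, hE'card, nsmul_eq_mul]
    intro t ht
    rcases mem_powersetCard.1 ht with ⟨htE', htcard⟩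
    have hat : a ∉ t := fun h => (mem_erase.1 (htE' h)).1 rfl
    have htE : insert a t ⊆ E := insert_subset haE (htE'.trans (erase_subset a E))
    have hcardins : (insert a t).card = w + 1 := by rw [card_insert_of_notMem hat, htcard]
    rw [hMgT _ htE, hMgA1 t htE', hcardins, htcard, hE'card, hn]
  rw [hsum1, hsum2]
  -- now pure arithmetic
  rcases lt_trichotomy (w+1) n with hlt2 | heq | hgt
  · -- w + 1 < n
    have hne : ¬ (w + 1 = n) := by omega
    simp only [hne, if_false]
    obtain ⟨d, hd⟩ : ∃ d, n - (w+1) = d + 1 := ⟨n - (w+1) - 1, by omega⟩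
    have h1 : (n-1) - (w+1) = d := by omega
    have h2 : (n-1) - w = d + 1 := by omega
    have hcc : ((n-1).choose (w+1) : ℝ) * (w+1) = ((n-1).choose w : ℝ) * (d+1) := by
      have := Nat.choose_succ_right_eq (n-1) w
      rw [h2] at this
      exact_mod_cast congrArg (Nat.cast (R := ℝ)) this
    rw [hd, h1, h2]
    push_cast
    have hd1 : ((d:ℝ) + 1) ≠ 0 := by positivity
    have hd2 : ((d:ℝ) + 1 + 1) ≠ 0 := by positivity
    field_simp
    ring_nf
    ring_nf at hcc
    nlinarith [hcc]
  · -- w + 1 = n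
    rw [if_pos heq]
    have h0 : n - (w+1) = 0 := by omega
    have h1 : (n-1) - (w+1) = 0 := by omega
    have h2 : (n-1) - w = 0 := by omega
    have h3 : (n-1).choose (w+1) = 0 := Nat.choose_eq_zero_of_lt (by omega)
    have h4 : (n-1).choose w = 1 := by
      have : n - 1 = w := by omega
      rw [this, Nat.choose_self]
    rw [h0, h1, h2, h3, h4]
    push_cast
    ring
  · -- w + 1 > n
    have hne : ¬ (w + 1 = n) := by omega
    simp only [hne, if_false]
    have h3 : (n-1).choose (w+1) = 0 := Nat.choose_eq_zero_of_lt (by omega)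
    have h4 : (n-1).choose w = 0 := Nat.choose_eq_zero_of_lt (by omega)
    rw [h3, h4]
    push_cast
    ring

end SSTaux

namespace SSTaux

lemma core : ∀ (n : ℕ) (E : Finset ℕ), E.card = n → ∀ (T : ℕ) (τ : Finset ℕ → ℕ),
    (∀ x ∈ E, x < T) →
    (∀ t : ℕ, ∀ s ∈ E.powerset, ∀ s' ∈ E.powerset,
        (s ∩ range t).card = (s' ∩ range t).card → s \ range t = s' \ range t →
        (t ≤ τ s ↔ t ≤ τ s')) →
    ∑ s ∈ E.powerset, Mg E (τ s) s ≤ 2 ^ n - 1 := by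
  intro n
  induction n with
  | zero =>
    intro E hcard T τ hT hP
    rw [Finset.card_eq_zero.1 hcard]
    simp [Mg_empty]
  | succ n ih =>
    intro E hcard T τ hT hP
    have hE : E.Nonempty := Finset.card_pos.1 (by omega)
    set a := E.max' hE with ha
    have haE : a ∈ E := E.max'_mem hE
    have hlt : ∀ x ∈ E.erase a, x < a := by
      intro x hx
      rcases mem_erase.1 hx with ⟨hxa, hxE⟩
      exact lt_of_le_of_ne (E.le_max' x hxE) hxa
    have hle : ∀ x ∈ E, x ≤ a := fun x hx => E.le_max' x hx
    have hE'card : (E.erase a).card = n := by rw [card_erase_of_mem haE]; omega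
    have haE' : a ∉ E.erase a := notMem_erase a E
    have hEins : E = insert a (E.erase a) := (insert_erase haE).symm
    have haT : a < T := hT a haE
    -- step 1: pointwise decomposition
    have hdecomp : ∀ u ∈ E.powerset,
        Mg E (τ u) u = Mg E (min (τ u) a) u +
          (if a < τ u then Mg E T u - Mg E a u else 0) := by
      intro u hu
      have huE : u ⊆ E := mem_powerset.1 hu
      by_cases h : a < τ u
      · rw [if_pos h, min_eq_right (le_of_lt h)]
        have : Mg E (τ u) u = Mg E T u :=
          Mg_eq_of_ge huE (fun x hx => lt_of_le_of_lt (hle x hx) h)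
            (fun x hx => lt_of_le_of_lt (hle x hx) haT)
        rw [this]; ring
      · rw [if_neg h, min_eq_left (not_lt.1 h)]; ring
    rw [sum_congr rfl hdecomp, sum_add_distrib]
    -- part 2 : the correction sum is ≤ 1
    have hpart2 : ∑ u ∈ E.powerset, (if a < τ u then Mg E T u - Mg E a u else 0) ≤ 1 := by
      rw [sum_powerset]
      have hbound : ∀ j ∈ range (E.card + 1),
          ∑ u ∈ Finset.powersetCard j E, (if a < τ u then Mg E T u - Mg E a u else 0)
            ≤ if j = E.card then 1 else 0 := by
        intro j _
        by_cases hex : ∃ u₀ ∈ Finset.powersetCard j E, a < τ u₀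
        · rcases hex with ⟨u₀, hu₀, hau₀⟩
          have hall : ∀ u ∈ Finset.powersetCard j E, a < τ u := by
            intro u hu
            rcases mem_powersetCard.1 hu with ⟨huE, hucard⟩
            rcases mem_powersetCard.1 hu₀ with ⟨hu₀E, hu₀card⟩
            have hiff := hP (a+1) u (mem_powerset.2 huE) u₀ (mem_powerset.2 hu₀E)
              (by
                have h1 : u ∩ range (a+1) = u := inter_eq_left.2
                  (fun x hx => mem_range.2 (Nat.lt_succ_of_le (hle x (huE hx))))
                have h2 : u₀ ∩ range (a+1) = u₀ := inter_eq_left.2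
                  (fun x hx => mem_range.2 (Nat.lt_succ_of_le (hle x (hu₀E hx))))
                rw [h1, h2, hucard, hu₀card])
              (by
                have h1 : u \ range (a+1) = ∅ := sdiff_eq_empty_iff_subset.2
                  (fun x hx => mem_range.2 (Nat.lt_succ_of_le (hle x (huE hx))))
                have h2 : u₀ \ range (a+1) = ∅ := sdiff_eq_empty_iff_subset.2
                  (fun x hx => mem_range.2 (Nat.lt_succ_of_le (hle x (hu₀E hx))))
                rw [h1, h2])
            have : a + 1 ≤ τ u := hiff.2 hau₀
            omega
          calc ∑ u ∈ Finset.powersetCard j E, (if a < τ u then Mg E T u - Mg E a u else 0)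
              = ∑ u ∈ Finset.powersetCard j E, (Mg E T u - Mg E a u) := by
                refine sum_congr rfl fun u hu => ?_
                rw [if_pos (hall u hu)]
            _ = if j = E.card then 1 else 0 := count_step E hE T hT j
            _ ≤ if j = E.card then 1 else 0 := le_refl _
        · push_neg at hex
          have : ∀ u ∈ Finset.powersetCard j E,
              (if a < τ u then Mg E T u - Mg E a u else 0) = 0 := by
            intro u hu
            rw [if_neg (not_lt.2 (hex u hu))]
          rw [sum_congr rfl this, sum_const, smul_zero]
          split <;> norm_num
      calc ∑ j ∈ range (E.card + 1), ∑ u ∈ Finset.powersetCard j E,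
              (if a < τ u then Mg E T u - Mg E a u else 0)
          ≤ ∑ j ∈ range (E.card + 1), (if j = E.card then (1:ℝ) else 0) :=
            sum_le_sum hbound
        _ = 1 := by rw [Finset.sum_ite_eq' (range (E.card+1)) E.card (fun _ => (1:ℝ)),
            if_pos (mem_range.2 (by omega))]
    -- part 1 : the stopped-at-a sum
    have hpart1 : ∑ u ∈ E.powerset, Mg E (min (τ u) a) u ≤ 2 * (2 ^ n - 1) := by
      have hsplit : ∑ u ∈ E.powerset, Mg E (min (τ u) a) u
          = (∑ s ∈ (E.erase a).powerset, Mg E (min (τ s) a) s)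
            + ∑ s ∈ (E.erase a).powerset, Mg E (min (τ (insert a s)) a) (insert a s) := by
        have h := sum_powerset_insert (s := E.erase a) haE'
          (fun u => Mg E (min (τ u) a) u)
        rw [← hEins] at h
        exact h
      rw [hsplit]
      -- convert to Mg over E.erase a
      have hconv0 : ∀ s ∈ (E.erase a).powerset,
          Mg E (min (τ s) a) s = Mg (E.erase a) (min (τ s) a) s := by
        intro s hs
        have hsE' : s ⊆ E.erase a := mem_powerset.1 hs
        have has : a ∉ s := fun h => haE' (hsE' h)
        rw [Mg_lower (hsE'.trans (erase_subset a E)) (min_le_right _ _),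
          erase_eq_of_notMem has]
      have hconv1 : ∀ s ∈ (E.erase a).powerset,
          Mg E (min (τ (insert a s)) a) (insert a s)
            = Mg (E.erase a) (min (τ (insert a s)) a) s := by
        intro s hs
        have hsE' : s ⊆ E.erase a := mem_powerset.1 hs
        have has : a ∉ s := fun h => haE' (hsE' h)
        rw [Mg_lower (insert_subset haE (hsE'.trans (erase_subset a E)))
          (min_le_right _ _), erase_insert has]
      rw [sum_congr rfl hconv0, sum_congr rfl hconv1]
      -- auxiliary: stopping property transfer
      have hPtrans : ∀ (β : Bool), ∀ t : ℕ, ∀ s ∈ (E.erase a).powerset,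
          ∀ s' ∈ (E.erase a).powerset,
          (s ∩ range t).card = (s' ∩ range t).card → s \ range t = s' \ range t →
          (t ≤ min (τ (if β then insert a s else s)) a ↔
            t ≤ min (τ (if β then insert a s' else s')) a) := by
        intro β t s hs s' hs' hcard hdiff
        have hsE' : s ⊆ E.erase a := mem_powerset.1 hs
        have hs'E' : s' ⊆ E.erase a := mem_powerset.1 hs'
        have has : a ∉ s := fun h => haE' (hsE' h)
        have has' : a ∉ s' := fun h => haE' (hs'E' h)
        have hmem : (if β then insert a s else s) ∈ E.powerset := by
          cases β <;> simp only [if_true, if_false, Bool.false_eq_true]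
          · exact mem_powerset.2 (hsE'.trans (erase_subset a E))
          · exact mem_powerset.2 (insert_subset haE (hsE'.trans (erase_subset a E)))
        have hmem' : (if β then insert a s' else s') ∈ E.powerset := by
          cases β <;> simp only [if_true, if_false, Bool.false_eq_true]
          · exact mem_powerset.2 (hs'E'.trans (erase_subset a E))
          · exact mem_powerset.2 (insert_subset haE (hs'E'.trans (erase_subset a E)))
        have hcard2 : ((if β then insert a s else s) ∩ range t).card
            = ((if β then insert a s' else s') ∩ range t).card := by
          cases β
          · simpa using hcard
          · simp only [if_true]
            by_cases hat : a ∈ range t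
            · rw [insert_inter_of_mem hat, insert_inter_of_mem hat,
                card_insert_of_notMem (fun h => has (mem_inter.1 h).1),
                card_insert_of_notMem (fun h => has' (mem_inter.1 h).1), hcard]
            · rw [insert_inter_of_notMem hat, insert_inter_of_notMem hat, hcard]
        have hdiff2 : (if β then insert a s else s) \ range t
            = (if β then insert a s' else s') \ range t := by
          cases β
          · simpa using hdiff
          · simp only [if_true]
            by_cases hat : a ∈ range t
            · rw [insert_sdiff_of_mem s hat, insert_sdiff_of_mem s' hat, hdiff]
            · rw [insert_sdiff_of_notMem s hat, insert_sdiff_of_notMem s' hat, hdiff]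
        have := hP t _ hmem _ hmem' hcard2 hdiff2
        simp only [le_min_iff]
        rw [this]
      have hbound0 := ih (E.erase a) hE'card a (fun s => min (τ s) a) hlt
        (by
          intro t s hs s' hs' h1 h2
          simpa using hPtrans false t s hs s' hs' h1 h2)
      have hbound1 := ih (E.erase a) hE'card a (fun s => min (τ (insert a s)) a) hlt
        (by
          intro t s hs s' hs' h1 h2
          simpa using hPtrans true t s hs s' hs' h1 h2)
      linarith
    have h2n : (2:ℝ) * (2 ^ n - 1) + 1 = 2 ^ (n+1) - 1 := by ring
    linarith [hpart1, hpart2]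

end SSTaux

namespace SSTaux

noncomputable def khatB (q : ℝ) (K : Finset ℕ) (d : Finset ℕ) : ℕ :=
  (K.filter (fun k =>
    (((Finset.Icc 1 k).filter (fun l => l ∉ d)).card : ℝ) /
      (max (((Finset.Icc 1 k).filter (fun l => l ∈ d)).card : ℝ) 1) ≤ q)).sup id

noncomputable def GB (q : ℝ) (K H0 : Finset ℕ) (d : Finset ℕ) : ℝ :=
  (((Finset.Icc 1 (khatB q K d)).filter (fun l => l ∈ H0 ∧ l ∈ d)).card : ℝ) /
    ((((Finset.Icc 1 (khatB q K d)).filter (fun l => l ∈ d)).card : ℝ) + q⁻¹)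

lemma khatB_le {q : ℝ} {K : Finset ℕ} {N : ℕ} (hK : K ⊆ Finset.Icc 1 N) (d : Finset ℕ) :
    khatB q K d ≤ N := by
  refine Finset.sup_le fun k hk => ?_
  exact (Finset.mem_Icc.1 (hK (mem_filter.1 hk).1)).2

lemma khatB_cond {q : ℝ} {K : Finset ℕ} {d : Finset ℕ} (h : khatB q K d ≠ 0) :
    khatB q K d ∈ K ∧
    (((Finset.Icc 1 (khatB q K d)).filter (fun l => l ∉ d)).card : ℝ) /
      (max (((Finset.Icc 1 (khatB q K d)).filter (fun l => l ∈ d)).card : ℝ) 1) ≤ q := by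
  set F := K.filter (fun k =>
    (((Finset.Icc 1 k).filter (fun l => l ∉ d)).card : ℝ) /
      (max (((Finset.Icc 1 k).filter (fun l => l ∈ d)).card : ℝ) 1) ≤ q) with hF
  rcases F.eq_empty_or_nonempty with hFe | hFne
  · exfalso; apply h; rw [khatB, ← hF, hFe]; simp
  · obtain ⟨b, hb, hbe⟩ := Finset.exists_mem_eq_sup F hFne id
    have hkb : khatB q K d = b := hbe
    rcases mem_filter.1 hb with ⟨hbK, hbcond⟩
    rw [khatB, ← hF] at *
    rw [hkb]
    exact ⟨hbK, hbcond⟩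

lemma GB_pointwise {q : ℝ} (hq0 : 0 < q) {N : ℕ} {K H0 : Finset ℕ}
    (hK : K ⊆ Finset.Icc 1 N) (hH0 : H0 ⊆ Finset.Icc 1 N)
    {c : Finset ℕ} (hcH : ∀ l ∈ c, l ∉ H0) {s : Finset ℕ} (hs : s ⊆ H0) :
    GB q K H0 (s ∪ c) ≤ q * Mg H0 (khatB q K (s ∪ c) + 1) s := by
  set kh := khatB q K (s ∪ c) with hkh
  have hone : ∀ l ∈ H0, 1 ≤ l := fun l hl => (Finset.mem_Icc.1 (hH0 hl)).1
  -- numerator identification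
  have hnum : (Finset.Icc 1 kh).filter (fun l => l ∈ H0 ∧ l ∈ s ∪ c)
      = s ∩ range (kh + 1) := by
    ext l
    simp only [mem_filter, Finset.mem_Icc, mem_inter, mem_range, mem_union]
    constructor
    · rintro ⟨⟨_, hl2⟩, hlH, hl | hl⟩
      · exact ⟨hl, by omega⟩
      · exact absurd hlH (hcH l hl)
    · rintro ⟨hls, hl⟩
      exact ⟨⟨hone l (hs hls), by omega⟩, hs hls, Or.inl hls⟩
  have hnum' : (s ∩ range (kh+1)).card
      = ((Finset.Icc 1 kh).filter (fun l => l ∈ H0 ∧ l ∈ s ∪ c)).card := by rw [hnum]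
  rw [GB, Mg, ← hkh, ← hnum']
  set V : ℕ := (s ∩ range (kh+1)).card with hV
  set R : ℕ := ((Finset.Icc 1 kh).filter (fun l => l ∈ s ∪ c)).card with hR
  set V' : ℕ := ((H0 \ s) ∩ range (kh+1)).card with hV'
  have hVR : V ≤ R := by
    rw [hV, hR, ← hnum]
    exact card_le_card (fun l hl => by
      rcases mem_filter.1 hl with ⟨h1, _, h3⟩
      exact mem_filter.2 ⟨h1, h3⟩)
  have hq' : (0:ℝ) < q⁻¹ := by positivity
  have hden1 : (0:ℝ) < (R:ℝ) + q⁻¹ := by positivity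
  have hden2 : (0:ℝ) < 1 + (V' : ℝ) := by positivity
  by_cases hk0 : kh = 0
  · have : V = 0 := by
      rw [hV, ← hnum, hk0]
      simp
    rw [this]
    simp only [Nat.cast_zero, zero_div]
    positivity
  · -- kh ≥ 1, so the condition holds at kh
    obtain ⟨hkK, hcond⟩ := khatB_cond (d := s ∪ c) (q := q) (K := K) hk0
    rw [← hkh] at hcond
    by_cases hR0 : R = 0
    · have : V = 0 := by omega
      rw [this]
      simp only [Nat.cast_zero, zero_div]
      positivity
    · have hR1 : (1:ℝ) ≤ (R:ℝ) := by exact_mod_cast Nat.one_le_iff_ne_zero.2 hR0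
      have hmax : max ((R:ℝ)) 1 = (R:ℝ) := max_eq_left hR1
      rw [← hR, hmax] at hcond
      have hA : (((Finset.Icc 1 kh).filter (fun l => l ∉ s ∪ c)).card : ℝ) ≤ q * R := by
        rw [div_le_iff₀ (by linarith)] at hcond
        linarith
      have hV'A : (V' : ℝ) ≤ (((Finset.Icc 1 kh).filter (fun l => l ∉ s ∪ c)).card : ℝ) := by
        have : (H0 \ s) ∩ range (kh+1) ⊆ (Finset.Icc 1 kh).filter (fun l => l ∉ s ∪ c) := by
          intro l hl
          rcases mem_inter.1 hl with ⟨hl1, hl2⟩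
          rcases mem_sdiff.1 hl1 with ⟨hlH, hls⟩
          refine mem_filter.2 ⟨Finset.mem_Icc.2 ⟨hone l hlH, by
            have := mem_range.1 hl2; omega⟩, ?_⟩
          intro hlu
          rcases mem_union.1 hlu with h | h
          · exact hls h
          · exact hcH l h hlH
        exact_mod_cast card_le_card this
      have hV'qR : (V' : ℝ) ≤ q * R := le_trans hV'A hA
      rw [← mul_div_assoc, div_le_div_iff₀ hden1 hden2]
      have hqq : q * q⁻¹ = 1 := mul_inv_cancel₀ (ne_of_gt hq0)
      have hVpos : (0:ℝ) ≤ (V:ℝ) := Nat.cast_nonneg V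
      nlinarith [hVpos, hV'qR, hqq]

end SSTaux

namespace SSTaux

lemma khat_stop {q : ℝ} {N : ℕ} {K H0 : Finset ℕ}
    (hH0 : H0 ⊆ Finset.Icc 1 N)
    {c : Finset ℕ} (hcH : ∀ l ∈ c, l ∉ H0) :
    ∀ t : ℕ, ∀ s ∈ H0.powerset, ∀ s' ∈ H0.powerset,
      (s ∩ range t).card = (s' ∩ range t).card → s \ range t = s' \ range t →
      (t ≤ khatB q K (s ∪ c) + 1 ↔ t ≤ khatB q K (s' ∪ c) + 1) := by
  intro t s hs s' hs' hcard hdiff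
  have hsH : s ⊆ H0 := mem_powerset.1 hs
  have hs'H : s' ⊆ H0 := mem_powerset.1 hs'
  have hone : ∀ l ∈ H0, 1 ≤ l := fun l hl => (Finset.mem_Icc.1 (hH0 hl)).1
  rcases Nat.eq_zero_or_pos t with rfl | ht
  · simp
  obtain ⟨t', rfl⟩ : ∃ t', t = t' + 1 := ⟨t - 1, by omega⟩
  simp only [Nat.add_le_add_iff_right]
  rcases Nat.eq_zero_or_pos t' with rfl | ht'
  · simp
  -- counts agree at each k ≥ t'
  have hcount : ∀ k : ℕ, t' ≤ k →
      ((Finset.Icc 1 k).filter (fun l => l ∈ s ∪ c)).card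
        = ((Finset.Icc 1 k).filter (fun l => l ∈ s' ∪ c)).card := by
    intro k hk
    have key : ∀ u : Finset ℕ, u ⊆ H0 → u \ range (t'+1) = s \ range (t'+1) →
        (Finset.Icc 1 k).filter (fun l => l ∈ u ∪ c)
          = (u ∩ range (t'+1)) ∪ (((s \ range (t'+1)) ∪ c) ∩ Finset.Icc 1 k) := by
      intro u hu hud
      ext l
      simp only [mem_filter, mem_union, mem_inter, mem_sdiff, mem_range, Finset.mem_Icc]
      constructor
      · rintro ⟨⟨hl1, hl2⟩, hl | hl⟩
        · by_cases hlt : l < t' + 1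
          · exact Or.inl ⟨hl, hlt⟩
          · refine Or.inr ⟨Or.inl ?_, hl1, hl2⟩
            have hmem : l ∈ u \ range (t'+1) := mem_sdiff.2 ⟨hl, by
              simp only [mem_range]; omega⟩
            rw [hud] at hmem
            simpa [mem_sdiff, mem_range] using hmem
        · exact Or.inr ⟨Or.inr hl, hl1, hl2⟩
      · rintro (⟨hlu, hlt⟩ | ⟨hl | hl, hl1, hl2⟩)
        · refine ⟨⟨hone l (hu hlu), ?_⟩, Or.inl hlu⟩
          omega
        · have hls : l ∈ u := by
            have hmem : l ∈ u \ range (t'+1) := by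
              rw [hud]; simpa [mem_sdiff, mem_range] using hl
            exact (mem_sdiff.1 hmem).1
          exact ⟨⟨hl1, hl2⟩, Or.inl hls⟩
        · exact ⟨⟨hl1, hl2⟩, Or.inr hl⟩
    have hdisj : ∀ u : Finset ℕ, u ⊆ H0 → Disjoint (u ∩ range (t'+1))
        (((s \ range (t'+1)) ∪ c) ∩ Finset.Icc 1 k) := by
      intro u hu
      rw [disjoint_left]
      intro l hl hl'
      rcases mem_inter.1 hl with ⟨hlu, hlr⟩
      rcases mem_inter.1 hl' with ⟨hlsc, _⟩
      rcases mem_union.1 hlsc with h | h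
      · exact (mem_sdiff.1 h).2 hlr
      · exact hcH l h (hu hlu)
    rw [key s hsH rfl, key s' hs'H hdiff.symm,
      card_union_of_disjoint (hdisj s hsH), card_union_of_disjoint (hdisj s' hs'H),
      hcard]
  have hccond : ∀ k ∈ K, t' ≤ k →
      ((((Finset.Icc 1 k).filter (fun l => l ∉ s ∪ c)).card : ℝ) /
        (max (((Finset.Icc 1 k).filter (fun l => l ∈ s ∪ c)).card : ℝ) 1) ≤ q ↔
       (((Finset.Icc 1 k).filter (fun l => l ∉ s' ∪ c)).card : ℝ) /
        (max (((Finset.Icc 1 k).filter (fun l => l ∈ s' ∪ c)).card : ℝ) 1) ≤ q) := by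
    intro k _ hk
    have h1 := Finset.card_filter_add_card_filter_not
      (s := Finset.Icc 1 k) (p := fun l => l ∈ s ∪ c)
    have h2 := Finset.card_filter_add_card_filter_not
      (s := Finset.Icc 1 k) (p := fun l => l ∈ s' ∪ c)
    have hc := hcount k hk
    have hnot : ((Finset.Icc 1 k).filter (fun l => l ∉ s ∪ c)).card
        = ((Finset.Icc 1 k).filter (fun l => l ∉ s' ∪ c)).card := by omega
    rw [hc, hnot]
  -- now compare suprema
  have hsup : ∀ (u u' : Finset ℕ), u ⊆ H0 → u' ⊆ H0 →
      (∀ k ∈ K, t' ≤ k →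
        ((((Finset.Icc 1 k).filter (fun l => l ∉ u ∪ c)).card : ℝ) /
          (max (((Finset.Icc 1 k).filter (fun l => l ∈ u ∪ c)).card : ℝ) 1) ≤ q →
         (((Finset.Icc 1 k).filter (fun l => l ∉ u' ∪ c)).card : ℝ) /
          (max (((Finset.Icc 1 k).filter (fun l => l ∈ u' ∪ c)).card : ℝ) 1) ≤ q)) →
      t' ≤ khatB q K (u ∪ c) → t' ≤ khatB q K (u' ∪ c) := by
    intro u u' hu hu' himp hle
    rw [khatB] at hle ⊢
    rw [Finset.le_sup_iff (by exact ht' : (0:ℕ) < t')] at hle ⊢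
    obtain ⟨k, hkmem, hkle⟩ := hle
    rcases mem_filter.1 hkmem with ⟨hkK, hkcond⟩
    exact ⟨k, mem_filter.2 ⟨hkK, himp k hkK hkle hkcond⟩, hkle⟩
  constructor
  · exact hsup s s' hsH hs'H (fun k hkK hk h => (hccond k hkK hk).1 h)
  · exact hsup s' s hs'H hsH (fun k hkK hk h => (hccond k hkK hk).2 h)

lemma sum_GB_le {q : ℝ} (hq0 : 0 < q) {N : ℕ} {K H0 : Finset ℕ}
    (hK : K ⊆ Finset.Icc 1 N) (hH0 : H0 ⊆ Finset.Icc 1 N)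
    {c : Finset ℕ} (hcH : ∀ l ∈ c, l ∉ H0) :
    ∑ s ∈ H0.powerset, GB q K H0 (s ∪ c) ≤ q * 2 ^ H0.card := by
  have step1 : ∑ s ∈ H0.powerset, GB q K H0 (s ∪ c)
      ≤ ∑ s ∈ H0.powerset, q * Mg H0 (khatB q K (s ∪ c) + 1) s := by
    refine sum_le_sum fun s hs => ?_
    exact GB_pointwise hq0 hK hH0 hcH (mem_powerset.1 hs)
  have step2 : ∑ s ∈ H0.powerset, q * Mg H0 (khatB q K (s ∪ c) + 1) s
      = q * ∑ s ∈ H0.powerset, Mg H0 (khatB q K (s ∪ c) + 1) s := by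
    rw [mul_sum]
  have step3 : ∑ s ∈ H0.powerset, Mg H0 (khatB q K (s ∪ c) + 1) s
      ≤ 2 ^ H0.card - 1 := by
    refine core H0.card H0 rfl (N+1) (fun s => khatB q K (s ∪ c) + 1) ?_ ?_
    · intro x hx
      have := (Finset.mem_Icc.1 (hH0 hx)).2
      omega
    · exact khat_stop hH0 hcH
  calc ∑ s ∈ H0.powerset, GB q K H0 (s ∪ c)
      ≤ q * ∑ s ∈ H0.powerset, Mg H0 (khatB q K (s ∪ c) + 1) s := by
        rw [← step2]; exact step1
    _ ≤ q * (2 ^ H0.card - 1) := by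
        refine mul_le_mul_of_nonneg_left step3 (le_of_lt hq0)
    _ ≤ q * 2 ^ H0.card := by nlinarith [hq0]

end SSTaux

namespace SSTaux

lemma sum_powerset_union_disj {A B : Finset ℕ} (h : Disjoint A B) (f : Finset ℕ → ℝ) :
    ∑ d ∈ (A ∪ B).powerset, f d = ∑ s ∈ A.powerset, ∑ t ∈ B.powerset, f (s ∪ t) := by
  classical
  induction A using Finset.induction_on generalizing f with
  | empty =>
    simp only [Finset.empty_union, powerset_empty, sum_singleton, Finset.empty_union]
  | @insert a A haA ih =>
    have hAB : Disjoint A B := h.mono_left (subset_insert a A)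
    have haB : a ∉ A ∪ B := by
      rw [Finset.mem_union]
      rintro (hc | hc)
      · exact haA hc
      · exact (Finset.disjoint_left.1 h) (mem_insert_self a A) hc
    have h1 : insert a A ∪ B = insert a (A ∪ B) := by
      rw [Finset.insert_union]
    rw [h1, sum_powerset_insert haB f, ih hAB f, ih hAB (fun d => f (insert a d)),
      sum_powerset_insert haA]
    congr 1
    refine sum_congr rfl fun s _ => ?_
    refine sum_congr rfl fun t _ => ?_
    rw [Finset.insert_union]

end SSTaux
open scoped ENNReal
open MeasureTheory ProbabilityTheory Finset
-- main theorem (appended to stageA for testing)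
theorem selective_seq_testing_I
    {Ω : Type*} [MeasurableSpace Ω] (μ : Measure Ω) [IsProbabilityMeasure μ]
    (N : ℕ) (P : ℕ → Ω → ℝ) (hmeas : ∀ l, Measurable (P l))
    (hval : ∀ l ∈ Finset.Icc 1 N, ∀ ω, P l ω = 1/2 ∨ P l ω = 1)
    (H0 : Finset ℕ) (hH0 : H0 ⊆ Finset.Icc 1 N)
    -- null p-values are fair coins on {1/2, 1}
    (hnull : ∀ l ∈ H0, μ {ω | P l ω = 1/2} = 1/2 ∧ μ {ω | P l ω = 1} = 1/2)
    -- null p-values are jointly independent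
    (hiid : iIndepFun
      (fun l : {l // l ∈ H0} => P l.1) μ)
    -- null p-values are independent of the non-null p-values
    (hindep : IndepFun (fun ω => fun l : {l // l ∈ H0} => P l.1 ω)
      (fun ω => fun l : {l // l ∈ Finset.Icc 1 N \ H0} => P l.1 ω) μ)
    (q : ℝ) (hq : q ∈ Set.Icc (0:ℝ) 1)
    (K : Finset ℕ) (hK : K ⊆ Finset.Icc 1 N)
    (khat : Ω → ℕ)
    (hkhat : ∀ ω, khat ω =
      (K.filter (fun k =>
        (((Finset.Icc 1 k).filter (fun l => 1/2 < P l ω)).card : ℝ) /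
          (max (((Finset.Icc 1 k).filter (fun l => P l ω ≤ 1/2)).card : ℝ) 1) ≤ q)).sup id)
    (V R : Ω → ℕ)
    (hV : ∀ ω, V ω =
      ((Finset.Icc 1 (khat ω)).filter (fun l => l ∈ H0 ∧ P l ω ≤ 1/2)).card)
    (hR : ∀ ω, R ω = ((Finset.Icc 1 (khat ω)).filter (fun l => P l ω ≤ 1/2)).card) :
    ∫ ω, (if q = 0 then 0 else (V ω : ℝ) / ((R ω : ℝ) + q⁻¹)) ∂μ ≤ q := by
  classical
  by_cases hq0 : q = 0
  · subst hq0
    simp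
  have hqpos : 0 < q := lt_of_le_of_ne hq.1 (Ne.symm hq0)
  set m := H0.card with hm
  -- the events
  set Ev : Finset ℕ → Set Ω :=
    fun d => {ω | ∀ l ∈ Finset.Icc 1 N, (P l ω ≤ 1/2 ↔ l ∈ d)} with hEv
  set As : Finset ℕ → Set Ω :=
    fun d => {ω | ∀ l ∈ H0, (P l ω ≤ 1/2 ↔ l ∈ d)} with hAsdef
  set Bs : Finset ℕ → Set Ω :=
    fun d => {ω | ∀ l ∈ Finset.Icc 1 N \ H0, (P l ω ≤ 1/2 ↔ l ∈ d)} with hBsdef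
  have hEvMeas : ∀ d, MeasurableSet (Ev d) := by
    intro d
    have : Ev d = ⋂ l ∈ (Finset.Icc 1 N : Finset ℕ), {ω | P l ω ≤ 1/2 ↔ l ∈ d} := by
      ext ω; simp [hEv, Set.mem_iInter]
    rw [this]
    refine Set.Finite.measurableSet_biInter (Finset.finite_toSet _) fun l _ => ?_
    by_cases hld : l ∈ d
    · simp only [hld, iff_true]
      exact (hmeas l) measurableSet_Iic
    · simp only [hld, iff_false]
      exact ((hmeas l) measurableSet_Iic).compl
  have hBsMeas : ∀ d, MeasurableSet (Bs d) := by
    intro d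
    have : Bs d = ⋂ l ∈ (Finset.Icc 1 N \ H0 : Finset ℕ), {ω | P l ω ≤ 1/2 ↔ l ∈ d} := by
      ext ω; simp [hBsdef, Set.mem_iInter]
    rw [this]
    refine Set.Finite.measurableSet_biInter (Set.finite_mem_finset _) fun l _ => ?_
    by_cases hld : l ∈ d
    · simp only [hld, iff_true]
      exact (hmeas l) measurableSet_Iic
    · simp only [hld, iff_false]
      exact ((hmeas l) measurableSet_Iic).compl
  -- pointwise representation of the integrand
  have hrepr : ∀ ω, (if q = 0 then 0 else (V ω : ℝ) / ((R ω : ℝ) + q⁻¹))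
      = ∑ d ∈ (Finset.Icc 1 N).powerset,
          Set.indicator (Ev d) (fun _ => SSTaux.GB q K H0 d) ω := by
    intro ω
    rw [if_neg hq0]
    set d₀ := (Finset.Icc 1 N).filter (fun l => P l ω ≤ 1/2) with hd₀
    have hd₀mem : d₀ ∈ (Finset.Icc 1 N).powerset := mem_powerset.2 (filter_subset _ _)
    have hωd₀ : ω ∈ Ev d₀ := by
      intro l hl
      simp [hd₀, mem_filter, hl]
    have huniq : ∀ d ∈ (Finset.Icc 1 N).powerset, d ≠ d₀ → ω ∉ Ev d := by
      intro d hd hne hωd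
      apply hne
      ext l
      by_cases hl : l ∈ Finset.Icc 1 N
      · rw [← hωd l hl]
        simp [hd₀, mem_filter, hl]
      · constructor
        · intro h; exact absurd (mem_powerset.1 hd h) hl
        · intro h; exact absurd (mem_filter.1 h).1 hl
    rw [Finset.sum_eq_single_of_mem d₀ hd₀mem (fun d hd hne => by
      rw [Set.indicator_of_notMem (huniq d hd hne)])]
    rw [Set.indicator_of_mem hωd₀]
    -- identify khat, V, R with their combinatorial versions at d₀
    have hkh : khat ω = SSTaux.khatB q K d₀ := by
      rw [hkhat ω, SSTaux.khatB]
      congr 1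
      refine Finset.filter_congr fun k hkK => ?_
      have hkN : k ≤ N := (Finset.mem_Icc.1 (hK hkK)).2
      have h1 : (Finset.Icc 1 k).filter (fun l => 1/2 < P l ω)
          = (Finset.Icc 1 k).filter (fun l => l ∉ d₀) := by
        refine Finset.filter_congr fun l hl => ?_
        have hlN : l ∈ Finset.Icc 1 N := by
          rcases Finset.mem_Icc.1 hl with ⟨h1', h2'⟩
          exact Finset.mem_Icc.2 ⟨h1', le_trans h2' hkN⟩
        simp only [hd₀, mem_filter, hlN, true_and]
        exact ⟨fun h h' => absurd h (not_lt.2 h'), fun h => not_le.1 h⟩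
      have h2 : (Finset.Icc 1 k).filter (fun l => P l ω ≤ 1/2)
          = (Finset.Icc 1 k).filter (fun l => l ∈ d₀) := by
        refine Finset.filter_congr fun l hl => ?_
        have hlN : l ∈ Finset.Icc 1 N := by
          rcases Finset.mem_Icc.1 hl with ⟨h1', h2'⟩
          exact Finset.mem_Icc.2 ⟨h1', le_trans h2' hkN⟩
        simp only [hd₀, mem_filter, hlN, true_and]
      rw [h1, h2]
    have hkhN : SSTaux.khatB q K d₀ ≤ N := SSTaux.khatB_le hK d₀
    have hVd : V ω = ((Finset.Icc 1 (SSTaux.khatB q K d₀)).filter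
        (fun l => l ∈ H0 ∧ l ∈ d₀)).card := by
      rw [hV ω, hkh]
      congr 1
      refine Finset.filter_congr fun l hl => ?_
      have hlN : l ∈ Finset.Icc 1 N := by
        rcases Finset.mem_Icc.1 hl with ⟨h1', h2'⟩
        exact Finset.mem_Icc.2 ⟨h1', le_trans h2' hkhN⟩
      simp only [hd₀, mem_filter, hlN, true_and]
    have hRd : R ω = ((Finset.Icc 1 (SSTaux.khatB q K d₀)).filter
        (fun l => l ∈ d₀)).card := by
      rw [hR ω, hkh]
      congr 1
      refine Finset.filter_congr fun l hl => ?_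
      have hlN : l ∈ Finset.Icc 1 N := by
        rcases Finset.mem_Icc.1 hl with ⟨h1', h2'⟩
        exact Finset.mem_Icc.2 ⟨h1', le_trans h2' hkhN⟩
      simp only [hd₀, mem_filter, hlN, true_and]
    rw [SSTaux.GB, hVd, hRd]
  -- integral evaluation
  have hint : ∫ ω, (if q = 0 then 0 else (V ω : ℝ) / ((R ω : ℝ) + q⁻¹)) ∂μ
      = ∑ d ∈ (Finset.Icc 1 N).powerset, (μ (Ev d)).toReal * SSTaux.GB q K H0 d := by
    have hfun : (fun ω => (if q = 0 then 0 else (V ω : ℝ) / ((R ω : ℝ) + q⁻¹)))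
        = fun ω => ∑ d ∈ (Finset.Icc 1 N).powerset,
            Set.indicator (Ev d) (fun _ => SSTaux.GB q K H0 d) ω := funext hrepr
    rw [hfun, integral_finset_sum _ (fun d _ => (integrable_const _).indicator (hEvMeas d))]
    refine sum_congr rfl fun d _ => ?_
    rw [integral_indicator_const _ (hEvMeas d), smul_eq_mul, measureReal_def]
  -- measure of the null-pattern event
  have hAsMeasure : ∀ d : Finset ℕ, μ (As d) = (1/2 : ℝ≥0∞) ^ m := by
    intro d
    set sets : {l // l ∈ H0} → Set ℝ :=
      fun l => if l.1 ∈ d then Set.Iic (1/2) else (Set.Iic (1/2))ᶜ with hsets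
    have hsetsm : ∀ i : {l // l ∈ H0}, i ∈ (Finset.univ : Finset {l // l ∈ H0}) →
        MeasurableSet (sets i) := by
      intro i _
      by_cases h : i.1 ∈ d
      · simp only [hsets, h, if_true]; exact measurableSet_Iic
      · simp only [hsets, h, if_false]; exact measurableSet_Iic.compl
    have hkey := hiid.measure_inter_preimage_eq_mul (S := Finset.univ) hsetsm
    have hset : As d = ⋂ i ∈ (Finset.univ : Finset {l // l ∈ H0}),
        P i.1 ⁻¹' sets i := by
      ext ω
      simp only [hAsdef, Set.mem_setOf_eq, Set.mem_iInter, Set.mem_preimage, hsets]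
      constructor
      · intro h i _
        by_cases hid : i.1 ∈ d
        · simp only [hid, if_true, Set.mem_Iic]
          exact (h i.1 i.2).2 hid
        · simp only [hid, if_false, Set.mem_compl_iff, Set.mem_Iic]
          intro hle
          exact hid ((h i.1 i.2).1 hle)
      · intro h l hl
        have h2 := h ⟨l, hl⟩ (Finset.mem_univ _)
        by_cases hid : l ∈ d
        · simp only [hid, if_true, Set.mem_Iic] at h2
          exact ⟨fun _ => hid, fun _ => h2⟩
        · simp only [hid, if_false, Set.mem_compl_iff, Set.mem_Iic] at h2
          exact ⟨fun hle => absurd hle h2, fun hld => absurd hld hid⟩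
    rw [hset, hkey]
    have hfac : ∀ i : {l // l ∈ H0},
        μ (P i.1 ⁻¹' sets i) = (1/2 : ℝ≥0∞) := by
      intro i
      have hiIcc : i.1 ∈ Finset.Icc 1 N := hH0 i.2
      by_cases hid : i.1 ∈ d
      · have hpre : (fun ω => P i.1 ω) ⁻¹' (Set.Iic (1/2 : ℝ)) = {ω | P i.1 ω = 1/2} := by
          ext ω
          simp only [Set.mem_preimage, Set.mem_Iic, Set.mem_setOf_eq]
          constructor
          · intro hle
            rcases hval i.1 hiIcc ω with h | h
            · exact h
            · exfalso; rw [h] at hle; norm_num at hle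
          · intro heq; rw [heq]
        simp only [hsets, hid, if_true]
        rw [show P i.1 ⁻¹' Set.Iic (1/2 : ℝ) = {ω | P i.1 ω = 1/2} from hpre]
        exact (hnull i.1 i.2).1
      · have hpre : (fun ω => P i.1 ω) ⁻¹' ((Set.Iic (1/2 : ℝ))ᶜ) = {ω | P i.1 ω = 1} := by
          ext ω
          simp only [Set.mem_preimage, Set.mem_compl_iff, Set.mem_Iic, Set.mem_setOf_eq]
          constructor
          · intro hn
            rcases hval i.1 hiIcc ω with h | h
            · exfalso; rw [h] at hn; norm_num at hn
            · exact h
          · intro heq; rw [heq]; norm_num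
        simp only [hsets, hid, if_false]
        rw [show P i.1 ⁻¹' (Set.Iic (1/2 : ℝ))ᶜ = {ω | P i.1 ω = 1} from hpre]
        exact (hnull i.1 i.2).2
    rw [Finset.prod_congr rfl (fun i _ => hfac i), prod_const, card_univ, Fintype.card_coe]
  -- independence: the full pattern measure factorizes
  have hprod : ∀ d ∈ (Finset.Icc 1 N).powerset,
      μ (Ev d) = (1/2 : ℝ≥0∞) ^ m * μ (Bs d) := by
    intro d hd
    have hdsub : d ⊆ Finset.Icc 1 N := mem_powerset.1 hd
    have hsplit : Ev d = As d ∩ Bs d := by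
      ext ω
      simp only [hEv, hAsdef, hBsdef, Set.mem_setOf_eq, Set.mem_inter_iff]
      constructor
      · intro h
        exact ⟨fun l hl => h l (hH0 hl), fun l hl => h l (Finset.mem_sdiff.1 hl).1⟩
      · rintro ⟨h1, h2⟩ l hl
        by_cases hlH : l ∈ H0
        · exact h1 l hlH
        · exact h2 l (Finset.mem_sdiff.2 ⟨hl, hlH⟩)
    set SA : Set ({l // l ∈ H0} → ℝ) := {f | ∀ l, f l ≤ 1/2 ↔ l.1 ∈ d} with hSA
    set SB : Set ({l // l ∈ Finset.Icc 1 N \ H0} → ℝ) :=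
      {f | ∀ l, f l ≤ 1/2 ↔ l.1 ∈ d} with hSB
    have hSAm : MeasurableSet SA := by
      have hrw : SA = ⋂ l : {l // l ∈ H0}, (fun f : {l // l ∈ H0} → ℝ => f l) ⁻¹'
          (if l.1 ∈ d then Set.Iic (1/2 : ℝ) else (Set.Iic (1/2 : ℝ))ᶜ) := by
        ext f
        simp only [hSA, Set.mem_setOf_eq, Set.mem_iInter, Set.mem_preimage]
        constructor
        · intro h l
          by_cases hld : l.1 ∈ d
          · simp only [hld, if_true, Set.mem_Iic]; exact (h l).2 hld
          · simp only [hld, if_false, Set.mem_compl_iff, Set.mem_Iic]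
            intro hle; exact hld ((h l).1 hle)
        · intro h l
          have h2 := h l
          by_cases hld : l.1 ∈ d
          · simp only [hld, if_true, Set.mem_Iic] at h2
            exact ⟨fun _ => hld, fun _ => h2⟩
          · simp only [hld, if_false, Set.mem_compl_iff, Set.mem_Iic] at h2
            exact ⟨fun hle => absurd hle h2, fun h' => absurd h' hld⟩
      rw [hrw]
      refine MeasurableSet.iInter fun l => ?_
      by_cases hld : l.1 ∈ d
      · simp only [hld, if_true]; exact measurable_pi_apply l measurableSet_Iic
      · simp only [hld, if_false]; exact measurable_pi_apply l measurableSet_Iic.compl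
    have hSBm : MeasurableSet SB := by
      have hrw : SB = ⋂ l : {l // l ∈ Finset.Icc 1 N \ H0},
          (fun f : {l // l ∈ Finset.Icc 1 N \ H0} → ℝ => f l) ⁻¹'
          (if l.1 ∈ d then Set.Iic (1/2 : ℝ) else (Set.Iic (1/2 : ℝ))ᶜ) := by
        ext f
        simp only [hSB, Set.mem_setOf_eq, Set.mem_iInter, Set.mem_preimage]
        constructor
        · intro h l
          by_cases hld : l.1 ∈ d
          · simp only [hld, if_true, Set.mem_Iic]; exact (h l).2 hld
          · simp only [hld, if_false, Set.mem_compl_iff, Set.mem_Iic]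
            intro hle; exact hld ((h l).1 hle)
        · intro h l
          have h2 := h l
          by_cases hld : l.1 ∈ d
          · simp only [hld, if_true, Set.mem_Iic] at h2
            exact ⟨fun _ => hld, fun _ => h2⟩
          · simp only [hld, if_false, Set.mem_compl_iff, Set.mem_Iic] at h2
            exact ⟨fun hle => absurd hle h2, fun h' => absurd h' hld⟩
      rw [hrw]
      refine MeasurableSet.iInter fun l => ?_
      by_cases hld : l.1 ∈ d
      · simp only [hld, if_true]; exact measurable_pi_apply l measurableSet_Iic
      · simp only [hld, if_false]; exact measurable_pi_apply l measurableSet_Iic.compl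
    have hApre : As d = (fun ω => fun l : {l // l ∈ H0} => P l.1 ω) ⁻¹' SA := by
      ext ω
      simp only [hAsdef, Set.mem_setOf_eq, Set.mem_preimage, hSA, Subtype.forall]
    have hBpre : Bs d = (fun ω => fun l : {l // l ∈ Finset.Icc 1 N \ H0} => P l.1 ω) ⁻¹' SB := by
      ext ω
      simp only [hBsdef, Set.mem_setOf_eq, Set.mem_preimage, hSB, Subtype.forall]
    rw [hsplit, hApre, hBpre,
      hindep.measure_inter_preimage_eq_mul SA SB hSAm hSBm, ← hApre]
    rw [hAsMeasure d]
  -- rewrite the measure factors in the sum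
  have hsum1 : ∑ d ∈ (Finset.Icc 1 N).powerset, (μ (Ev d)).toReal * SSTaux.GB q K H0 d
      = ∑ d ∈ (Finset.Icc 1 N).powerset,
          (1/2 : ℝ) ^ m * (μ (Bs d)).toReal * SSTaux.GB q K H0 d := by
    refine sum_congr rfl fun d hd => ?_
    rw [hprod d hd, ENNReal.toReal_mul]
    congr 2
    rw [ENNReal.toReal_pow]
    norm_num
  -- regroup the sum over patterns into null / non-null parts
  set C : Finset ℕ := Finset.Icc 1 N \ H0 with hC
  have hIccsplit : Finset.Icc 1 N = H0 ∪ C := (Finset.union_sdiff_of_subset hH0).symm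
  have hdisjHC : Disjoint H0 C := Finset.disjoint_sdiff
  set f : Finset ℕ → ℝ :=
    fun d => (1/2 : ℝ) ^ m * (μ (Bs d)).toReal * SSTaux.GB q K H0 d with hf
  have hregroup : ∑ d ∈ (Finset.Icc 1 N).powerset, f d
      = ∑ c ∈ C.powerset, ∑ s ∈ H0.powerset, f (s ∪ c) := by
    rw [hIccsplit, SSTaux.sum_powerset_union_disj hdisjHC f]
    exact Finset.sum_comm
  -- key inner bound for each non-null pattern c
  have hinner : ∀ c ∈ C.powerset, ∑ s ∈ H0.powerset, f (s ∪ c)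
      ≤ q * (μ (Bs c)).toReal := by
    intro c hc
    have hcC : c ⊆ C := mem_powerset.1 hc
    have hcH : ∀ l ∈ c, l ∉ H0 := fun l hl => (Finset.mem_sdiff.1 (hcC hl)).2
    have hBsc : ∀ s, s ⊆ H0 → Bs (s ∪ c) = Bs c := by
      intro s hs
      ext ω
      simp only [hBsdef, Set.mem_setOf_eq]
      refine forall₂_congr fun l hl => ?_
      have hlH : l ∉ H0 := (Finset.mem_sdiff.1 hl).2
      have : l ∈ s ∪ c ↔ l ∈ c := by
        simp only [Finset.mem_union]
        exact ⟨fun h => h.resolve_left (fun h' => hlH (hs h')), Or.inr⟩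
      rw [this]
    have hstep : ∑ s ∈ H0.powerset, f (s ∪ c)
        = (1/2 : ℝ) ^ m * (μ (Bs c)).toReal *
            ∑ s ∈ H0.powerset, SSTaux.GB q K H0 (s ∪ c) := by
      rw [mul_sum]
      refine sum_congr rfl fun s hs => ?_
      rw [hf]
      simp only
      rw [hBsc s (mem_powerset.1 hs)]
    rw [hstep]
    have hsum := SSTaux.sum_GB_le hqpos hK hH0 hcH
    have hnn : (0:ℝ) ≤ (1/2 : ℝ) ^ m * (μ (Bs c)).toReal := by positivity
    calc (1/2 : ℝ) ^ m * (μ (Bs c)).toReal * ∑ s ∈ H0.powerset, SSTaux.GB q K H0 (s ∪ c)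
        ≤ (1/2 : ℝ) ^ m * (μ (Bs c)).toReal * (q * 2 ^ m) :=
          mul_le_mul_of_nonneg_left hsum hnn
      _ = q * (μ (Bs c)).toReal * ((1/2 : ℝ) ^ m * 2 ^ m) := by ring
      _ = q * (μ (Bs c)).toReal := by
          rw [← mul_pow]
          norm_num
  -- the non-null pattern events are pairwise disjoint, so their probabilities sum to ≤ 1
  have hBsum : ∑ c ∈ C.powerset, (μ (Bs c)).toReal ≤ 1 := by
    have hdisjB : ∀ c ∈ C.powerset, ∀ c' ∈ C.powerset, c ≠ c' →
        Disjoint (Bs c) (Bs c') := by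
      intro c hc c' hc' hne
      rw [Set.disjoint_left]
      intro ω hω hω'
      apply hne
      ext l
      by_cases hl : l ∈ C
      · rw [← hω l hl, hω' l hl]
      · constructor
        · intro h; exact absurd (mem_powerset.1 hc h) hl
        · intro h; exact absurd (mem_powerset.1 hc' h) hl
    have hmeq : ∑ c ∈ C.powerset, μ (Bs c) = μ (⋃ c ∈ C.powerset, Bs c) :=
      (measure_biUnion_finset hdisjB (fun c _ => hBsMeas c)).symm
    have hle1 : ∑ c ∈ C.powerset, μ (Bs c) ≤ 1 := by
      rw [hmeq]
      exact prob_le_one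
    have htr : ∑ c ∈ C.powerset, (μ (Bs c)).toReal
        = (∑ c ∈ C.powerset, μ (Bs c)).toReal := by
      rw [ENNReal.toReal_sum (fun c _ => measure_ne_top μ (Bs c))]
    rw [htr]
    have := ENNReal.toReal_mono (by norm_num : (1:ℝ≥0∞) ≠ ∞) hle1
    simpa using this
  -- put everything together
  rw [hint, hsum1]
  have hform : ∑ d ∈ (Finset.Icc 1 N).powerset,
      (1/2 : ℝ) ^ m * (μ (Bs d)).toReal * SSTaux.GB q K H0 d
      = ∑ d ∈ (Finset.Icc 1 N).powerset, f d := rfl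
  rw [hform, hregroup]
  calc ∑ c ∈ C.powerset, ∑ s ∈ H0.powerset, f (s ∪ c)
      ≤ ∑ c ∈ C.powerset, q * (μ (Bs c)).toReal := sum_le_sum hinner
    _ = q * ∑ c ∈ C.powerset, (μ (Bs c)).toReal := by rw [mul_sum]
    _ ≤ q * 1 := mul_le_mul_of_nonneg_left hBsum (le_of_lt hqpos)
    _ = q := mul_one q
end

section
/- Let p₁, …, p_N be random variables taking values in {1/2, 1}, where the null indices form a set H₀, the variables (p_l)_{l ∈ H₀} are i.i.d. with P(p_l = 1/2) = P(p_l = 1) = 1/2, and they are independent of (p_l)_{l ∉ H₀}. For q ∈ [0,1] and a subset K ⊆ {1,…,N}, define k̂₊ = max{k ∈ K : (1 + #{l ≤ k : p_l > 1/2}) / max(#{l ≤ k : p_l ≤ 1/2}, 1) ≤ q} (with k̂₊ = 0 if the set is empty), V₊ = #{l ≤ k̂₊ : l ∈ H₀ and p_l ≤ 1/2}, and R₊ = #{l ≤ k̂₊ : p_l ≤ 1/2}. Then E[V₊ / max(R₊, 1)] ≤ q. -/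
open scoped Classical
open MeasureTheory ProbabilityTheory Finset

namespace SelSeqII


def cnt (A : Finset ℕ) (k : ℕ) : ℕ := (A.filter (fun l => l ≤ k)).card

lemma cnt_mono {A B : Finset ℕ} (h : A ⊆ B) (k : ℕ) : cnt A k ≤ cnt B k :=
  card_le_card (filter_subset_filter _ h)

lemma cnt_succ (A : Finset ℕ) (k : ℕ) :
    cnt A (k+1) = cnt A k + if k+1 ∈ A then 1 else 0 := by
  classical
  unfold cnt
  have h1 : A.filter (fun l => l ≤ k + 1)
      = A.filter (fun l => l ≤ k) ∪ A.filter (fun l => l = k+1) := by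
    rw [← filter_or]
    apply filter_congr
    intro x _
    constructor
    · intro h; rcases Nat.lt_or_ge x (k+1) with h'|h'
      · exact Or.inl (by omega)
      · exact Or.inr (by omega)
    · rintro (h|h) <;> omega
  rw [h1, card_union_of_disjoint, filter_eq']
  · split_ifs <;> simp
  · rw [disjoint_left]
    intro a ha hb
    simp only [mem_filter] at ha hb
    omega

lemma cnt_of_forall_le {A : Finset ℕ} {k : ℕ} (h : ∀ a ∈ A, a ≤ k) : cnt A k = A.card := by
  unfold cnt; rw [filter_true_of_mem h]

lemma cnt_union {B C : Finset ℕ} (h : Disjoint B C) (k : ℕ) :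
    cnt (B ∪ C) k = cnt B k + cnt C k := by
  unfold cnt
  rw [filter_union, card_union_of_disjoint (disjoint_filter_filter h)]

noncomputable def Mval (S A : Finset ℕ) (k : ℕ) : ℝ := (cnt A k : ℝ) / (1 + ((cnt S k - cnt A k : ℕ) : ℝ))

def Tst (K : Finset ℕ) (c : ℕ → ℕ → Bool) (A : Finset ℕ) : ℕ :=
  (K.filter (fun k => c k (cnt A k))).sup id

lemma count_mem_powersetCard (S1 : Finset ℕ) (t : ℕ) (ht : t ∈ S1) (c0 : ℕ) (hc0 : 1 ≤ c0) :
    ((S1.powersetCard c0).filter (fun B => t ∈ B)).card = (S1.card - 1).choose (c0 - 1) := by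
  classical
  rw [← card_erase_of_mem ht, ← Finset.card_powersetCard]
  refine Finset.card_bij' (fun B _ => B.erase t) (fun D _ => insert t D) ?_ ?_ ?_ ?_
  · intro B hB
    simp only [mem_filter, mem_powersetCard] at hB
    simp only [mem_powersetCard]
    exact ⟨erase_subset_erase _ hB.1.1, by rw [card_erase_of_mem hB.2, hB.1.2]⟩
  · intro D hD
    simp only [mem_powersetCard] at hD
    have htD : t ∉ D := fun h => (mem_erase.mp (hD.1 h)).1 rfl
    simp only [mem_filter, mem_powersetCard]
    refine ⟨⟨?_, ?_⟩, mem_insert_self _ _⟩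
    · intro x hx
      rcases mem_insert.mp hx with h|h
      · exact h ▸ ht
      · exact (erase_subset _ _) (hD.1 h)
    · rw [card_insert_of_notMem htD, hD.2]; omega
  · intro B hB
    simp only [mem_filter] at hB
    exact insert_erase hB.2
  · intro D hD
    simp only [mem_powersetCard] at hD
    have htD : t ∉ D := fun h => (mem_erase.mp (hD.1 h)).1 rfl
    exact erase_insert htD

lemma count_not_mem_powersetCard (S1 : Finset ℕ) (t : ℕ) (ht : t ∈ S1) (c0 : ℕ) :
    ((S1.powersetCard c0).filter (fun B => t ∉ B)).card = (S1.card - 1).choose c0 := by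
  classical
  rw [← card_erase_of_mem ht, ← Finset.card_powersetCard]
  congr 1
  ext B
  simp only [mem_filter, mem_powersetCard, subset_erase]
  tauto



lemma choose_ratio {m c0 : ℕ} (hc1 : 1 ≤ c0) (hc : c0 < m) :
    ((m-1).choose (c0-1) : ℝ) * (((c0:ℝ)-1) / (1 + ((m - c0 : ℕ):ℝ)))
      + ((m-1).choose c0 : ℝ) * ((c0:ℝ) / (1 + ((m-1-c0 : ℕ):ℝ)))
    = (m.choose c0 : ℝ) * ((c0:ℝ)/(1 + ((m-c0:ℕ):ℝ))) := by
  have h2 : ((m-1).choose c0) * c0 = ((m-1).choose (c0-1)) * (m - c0) := by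
    have := Nat.choose_succ_right_eq (m-1) (c0-1)
    have e1 : c0 - 1 + 1 = c0 := by omega
    rw [e1] at this
    rw [this]
    congr 1
    omega
  have h3 : m.choose c0 = (m-1).choose (c0-1) + (m-1).choose c0 := by
    have := Nat.choose_succ_succ (m-1) (c0-1)
    simp only [Nat.succ_eq_add_one] at this
    rw [show m-1+1 = m by omega, show c0-1+1 = c0 by omega] at this
    exact this
  have hd1 : ((m - c0 : ℕ) : ℝ) = (m:ℝ) - c0 := by
    push_cast [Nat.cast_sub hc.le]; ring
  have hd2 : ((m - 1 - c0 : ℕ) : ℝ) = (m:ℝ) - 1 - c0 := by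
    have : m - 1 - c0 = m - (1 + c0) := by omega
    rw [this, Nat.cast_sub (by omega)]
    push_cast; ring
  have h2' : ((m-1).choose c0 : ℝ) * c0 = ((m-1).choose (c0-1) : ℝ) * ((m:ℝ) - c0) := by
    have := congrArg (fun n : ℕ => (n : ℝ)) h2
    push_cast [Nat.cast_sub hc.le] at this
    linarith [this]
  rw [hd1, hd2, h3]
  have hden1 : (1 : ℝ) + ((m:ℝ) - c0) ≠ 0 := by
    have : (c0:ℝ) < m := by exact_mod_cast hc
    nlinarith
  have hden2 : (1 : ℝ) + ((m:ℝ) - 1 - c0) ≠ 0 := by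
    have : (c0:ℝ) < m := by exact_mod_cast hc
    nlinarith
  push_cast
  field_simp
  ring_nf
  nlinarith [h2', sq_nonneg ((m:ℝ) - c0)]



lemma inner_sum (S1 : Finset ℕ) (t : ℕ) (ht : t ∈ S1) (c0 : ℕ) (hc0 : c0 ≤ S1.card) :
    ∑ B ∈ S1.powersetCard c0, (if t ∈ B then (((c0 - 1 : ℕ)) : ℝ) / (1 + ((S1.card - c0 : ℕ) : ℝ))
        else (c0 : ℝ) / (1 + ((S1.card - 1 - c0 : ℕ) : ℝ)))
      ≤ (S1.card.choose c0 : ℝ) * ((c0:ℝ) / (1 + ((S1.card - c0 : ℕ) : ℝ))) := by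
  classical
  rw [Finset.sum_ite]
  rw [Finset.sum_const, Finset.sum_const]
  rcases Nat.eq_zero_or_pos c0 with h0 | h1
  · subst h0
    simp
  · rw [count_mem_powersetCard S1 t ht c0 h1, count_not_mem_powersetCard S1 t ht c0]
    rcases eq_or_lt_of_le hc0 with heq | hlt
    · -- c0 = m
      rw [← heq, Nat.sub_self, Nat.choose_self, Nat.choose_self,
        Nat.choose_eq_zero_of_lt (show c0 - 1 < c0 by omega)]
      simp only [one_smul, zero_smul, add_zero, Nat.cast_zero, one_mul, Nat.cast_one]
      have hcast : ((c0 - 1:ℕ):ℝ) ≤ (c0:ℝ) := by exact_mod_cast Nat.sub_le c0 1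
      gcongr
    · -- c0 < m
      have key := choose_ratio h1 hlt
      have hc1 : ((c0 - 1 : ℕ) : ℝ) = (c0:ℝ) - 1 := by
        push_cast [Nat.cast_sub h1]; ring
      rw [nsmul_eq_mul, nsmul_eq_mul, hc1]
      rw [key]



lemma sum_powerset_split (S : Finset ℕ) (p : ℕ → Prop) [DecidablePred p] (f : Finset ℕ → ℝ) :
    ∑ A ∈ S.powerset, f A
      = ∑ C ∈ (S.filter (fun x => ¬ p x)).powerset, ∑ B ∈ (S.filter p).powerset, f (B ∪ C) := by
  classical
  rw [← Finset.sum_product']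
  refine Finset.sum_bij' (fun A _ => (A.filter (fun x => ¬ p x), A.filter p))
    (fun x _ => x.2 ∪ x.1) ?_ ?_ ?_ ?_ ?_
  · intro A hA
    simp only [mem_powerset] at hA
    simp only [Finset.mem_product, mem_powerset]
    exact ⟨filter_subset_filter _ hA, filter_subset_filter _ hA⟩
  · intro x hx
    simp only [Finset.mem_product, mem_powerset] at hx
    simp only [mem_powerset]
    exact union_subset (hx.2.trans (filter_subset _ _)) (hx.1.trans (filter_subset _ _))
  · intro A hA
    simp only
    rw [filter_union_filter_not_eq]
  · intro x hx
    simp only [Finset.mem_product, mem_powerset] at hx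
    have h1 : ∀ a ∈ x.1, ¬ p a := fun a ha => (mem_filter.mp (hx.1 ha)).2
    have h2 : ∀ a ∈ x.2, p a := fun a ha => (mem_filter.mp (hx.2 ha)).2
    rw [filter_union, filter_union]
    rw [filter_true_of_mem h2, filter_false_of_mem h1,
      filter_false_of_mem (fun a ha => not_not_intro (h2 a ha)), filter_true_of_mem h1]
    rw [Prod.mk.injEq]
    constructor
    · rw [empty_union]
    · rw [union_empty]
  · intro A hA
    simp only
    rw [filter_union_filter_not_eq]



lemma step (S K : Finset ℕ) (c : ℕ → ℕ → Bool) (k : ℕ) :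
    ∑ A ∈ S.powerset, Mval S A (max (Tst K c A) k)
      ≤ ∑ A ∈ S.powerset, Mval S A (max (Tst K c A) (k+1)) := by
  classical
  by_cases htS : k + 1 ∈ S
  case neg =>
    apply Finset.sum_le_sum
    intro A hA
    apply le_of_eq
    by_cases hT : k + 1 ≤ Tst K c A
    · rw [max_eq_left (le_trans (Nat.le_succ k) hT), max_eq_left hT]
    · push_neg at hT
      have hTk : Tst K c A ≤ k := by omega
      rw [max_eq_right hTk, max_eq_right (by omega)]
      have hA' : k + 1 ∉ A := fun h => htS (mem_powerset.mp hA h)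
      unfold Mval
      rw [cnt_succ, cnt_succ, if_neg hA', if_neg htS, add_zero, add_zero]
  case pos =>
  set S1 := S.filter (fun l => l ≤ k + 1) with hS1
  set S2 := S.filter (fun l => ¬ l ≤ k + 1) with hS2
  set m := S1.card with hm
  have ht1 : k + 1 ∈ S1 := mem_filter.mpr ⟨htS, le_refl _⟩
  rw [sum_powerset_split S (fun l => l ≤ k + 1), sum_powerset_split S (fun l => l ≤ k + 1)]
  apply Finset.sum_le_sum
  intro C hC
  rw [mem_powerset] at hC
  have hCgt : ∀ x ∈ C, k + 1 < x := fun x hx => by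
    have := mem_filter.mp (hC hx); omega
  have hcntC0 : ∀ j ≤ k + 1, cnt C j = 0 := by
    intro j hj
    unfold cnt
    rw [filter_false_of_mem, card_empty]
    intro x hx
    have := hCgt x hx; omega
  -- facts about B ⊆ S1
  have hdisj : ∀ B ⊆ S1, Disjoint B C := by
    intro B hB
    rw [disjoint_left]
    intro a ha hc
    have h1 := mem_filter.mp (hB ha)
    have h2 := hCgt a hc
    omega
  have f1 : ∀ B, B ⊆ S1 → ∀ j, k + 1 ≤ j → cnt (B ∪ C) j = B.card + cnt C j := by
    intro B hB j hj
    rw [cnt_union (hdisj B hB)]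
    congr 1
    exact cnt_of_forall_le (fun a ha => le_trans (mem_filter.mp (hB ha)).2 hj)
  have f2 : ∀ B, B ⊆ S1 → cnt (B ∪ C) k = cnt B k := by
    intro B hB
    rw [cnt_union (hdisj B hB), hcntC0 k (by omega), add_zero]
  have fS1 : cnt S (k+1) = m := by
    rw [hm, hS1]
    unfold cnt
    rfl
  have fSk : cnt S k = m - 1 ∧ 1 ≤ m := by
    constructor
    · have := cnt_succ S k
      rw [if_pos htS, fS1] at this
      omega
    · rw [hm]
      exact card_pos.mpr ⟨k+1, ht1⟩
  -- the event
  set E : ℕ → Prop := fun a => ∀ j ∈ K, k + 1 ≤ j → ¬ (c j (a + cnt C j) = true) with hE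
  have hEvent : ∀ B, B ⊆ S1 → (Tst K c (B ∪ C) ≤ k ↔ E B.card) := by
    intro B hB
    rw [Tst, Finset.sup_le_iff]
    constructor
    · intro h j hj hj2 hc
      have := h j (mem_filter.mpr ⟨hj, by rw [f1 B hB j hj2]; exact hc⟩)
      simp only [id] at this
      omega
    · intro h j hj
      rw [mem_filter] at hj
      simp only [id]
      by_contra hcon
      push_neg at hcon
      exact h j hj.1 (by omega) (by rw [← f1 B hB j (by omega)]; exact hj.2)
  have hL : ∀ B ∈ S1.powerset, Mval S (B ∪ C) (max (Tst K c (B ∪ C)) k)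
      = if E B.card then Mval S (B ∪ C) k else Mval S (B ∪ C) (Tst K c (B ∪ C)) := by
    intro B hB
    rw [mem_powerset] at hB
    by_cases h : E B.card
    · rw [if_pos h, max_eq_right ((hEvent B hB).mpr h)]
    · rw [if_neg h, max_eq_left]
      by_contra hcon
      push_neg at hcon
      exact h ((hEvent B hB).mp (by omega))
  have hR : ∀ B ∈ S1.powerset, Mval S (B ∪ C) (max (Tst K c (B ∪ C)) (k+1))
      = if E B.card then (B.card : ℝ) / (1 + ((m - B.card : ℕ) : ℝ))
        else Mval S (B ∪ C) (Tst K c (B ∪ C)) := by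
    intro B hB
    rw [mem_powerset] at hB
    by_cases h : E B.card
    · rw [if_pos h, max_eq_right (le_trans ((hEvent B hB).mpr h) (Nat.le_succ k))]
      unfold Mval
      rw [f1 B hB (k+1) (le_refl _), hcntC0 (k+1) (le_refl _), add_zero, fS1]
    · rw [if_neg h, max_eq_left]
      by_contra hcon
      push_neg at hcon
      exact h ((hEvent B hB).mp (by omega))
  rw [Finset.sum_congr rfl hL, Finset.sum_congr rfl hR]
  rw [Finset.sum_powerset, Finset.sum_powerset]
  apply Finset.sum_le_sum
  intro j hj
  rw [Finset.mem_range] at hj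
  have hjm : j ≤ m := by omega
  by_cases hEj : E j
  case neg =>
    apply le_of_eq
    apply Finset.sum_congr rfl
    intro B hB
    rw [mem_powersetCard] at hB
    rw [hB.2, if_neg hEj, if_neg hEj]
  case pos =>
  have hcards : ∀ B ∈ S1.powersetCard j, B.card = j := fun B hB => (mem_powersetCard.mp hB).2
  calc ∑ B ∈ S1.powersetCard j, (if E B.card then Mval S (B ∪ C) k else Mval S (B ∪ C) (Tst K c (B ∪ C)))
      = ∑ B ∈ S1.powersetCard j, (if k+1 ∈ B then (((j - 1 : ℕ)) : ℝ) / (1 + ((m - j : ℕ) : ℝ))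
          else (j : ℝ) / (1 + ((m - 1 - j : ℕ) : ℝ))) := by
        apply Finset.sum_congr rfl
        intro B hB
        rw [mem_powersetCard] at hB
        rw [hB.2, if_pos hEj]
        have hBcard : cnt B (k+1) = j := by
          rw [cnt_of_forall_le (fun a ha => (mem_filter.mp (hB.1 ha)).2), hB.2]
        have hBk := cnt_succ B k
        rw [hBcard] at hBk
        unfold Mval
        rw [f2 B hB.1, fSk.1]
        by_cases htB : k + 1 ∈ B
        · rw [if_pos htB]
          rw [if_pos htB] at hBk
          have h1 : 1 ≤ j := by
            rw [← hB.2]; exact card_pos.mpr ⟨k+1, htB⟩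
          have e1 : cnt B k = j - 1 := by omega
          have e2 : m - 1 - (j - 1) = m - j := by omega
          rw [e1, e2]
        · rw [if_neg htB]
          rw [if_neg htB] at hBk
          have e1 : cnt B k = j := by omega
          rw [e1]
    _ ≤ (m.choose j : ℝ) * ((j:ℝ) / (1 + ((m - j : ℕ) : ℝ))) := inner_sum S1 (k+1) ht1 j hjm
    _ = ∑ B ∈ S1.powersetCard j, (if E B.card then (B.card : ℝ) / (1 + ((m - B.card : ℕ) : ℝ))
          else Mval S (B ∪ C) (Tst K c (B ∪ C))) := by
        rw [Finset.sum_congr rfl (g := fun B => (j : ℝ) / (1 + ((m - j : ℕ) : ℝ))) ?_]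
        · rw [Finset.sum_const, Finset.card_powersetCard, nsmul_eq_mul]
        · intro B hB
          rw [hcards B hB, if_pos hEj]



lemma final_sum (S : Finset ℕ) :
    ∑ A ∈ S.powerset, ((A.card : ℝ) / (1 + ((S.card - A.card : ℕ) : ℝ))) ≤ 2 ^ S.card := by
  classical
  rw [Finset.sum_powerset]
  rw [Finset.sum_congr rfl (g := fun j => (S.card.choose j : ℝ) * ((j:ℝ)/(1+((S.card - j:ℕ):ℝ))))
    (fun j hj => by
      rw [Finset.sum_congr rfl (fun B hB => by rw [(mem_powersetCard.mp hB).2]),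
        Finset.sum_const, card_powersetCard, nsmul_eq_mul])]
  rw [Finset.sum_congr rfl (g := fun j => if j = 0 then (0:ℝ) else (S.card.choose (j-1) : ℝ))
    (fun j hj => by
      rcases j with _|i
      · simp
      · simp only [Nat.succ_ne_zero, ite_false, if_neg (Nat.succ_ne_zero i)]
        rw [mem_range] at hj
        have hji : i + 1 ≤ S.card := by omega
        have hid : S.card.choose (i+1) * (i+1) = S.card.choose i * (S.card - i) :=
          Nat.choose_succ_right_eq _ _
        have hden : (1:ℝ) + ((S.card - (i+1):ℕ):ℝ) = ((S.card - i : ℕ):ℝ) := by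
          have e : S.card - i = (S.card - (i+1)) + 1 := by omega
          rw [e]; push_cast; ring
        have hpos : ((S.card - i:ℕ):ℝ) ≠ 0 := by
          have h1 : 1 ≤ S.card - i := by omega
          have : (0:ℝ) < ((S.card - i:ℕ):ℝ) := by exact_mod_cast h1
          linarith
        rw [hden]
        have e2 : ((S.card.choose (i+1):ℝ)) * (((i+1:ℕ):ℝ)/((S.card - i:ℕ):ℝ))
            = ((S.card.choose (i+1) * (i+1) : ℕ):ℝ)/((S.card - i:ℕ):ℝ) := by
          push_cast; ring
        have e3 : Nat.succ i - 1 = i := by omega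
        rw [show ((Nat.succ i : ℕ):ℝ) = ((i+1:ℕ):ℝ) by norm_cast]
        rw [e2, hid, e3]
        push_cast
        rw [mul_div_assoc, div_self hpos, mul_one])]
  rw [Finset.sum_range_succ']
  simp only [Nat.succ_ne_zero, ite_false, Nat.add_sub_cancel, ite_true, if_true, if_pos rfl, add_zero, if_neg]
  have h2n : ∑ i ∈ Finset.range (S.card + 1), (S.card.choose i : ℝ) = 2 ^ S.card := by
    rw [← Nat.cast_sum]
    rw [Nat.sum_range_choose]
    push_cast; ring
  rw [Finset.sum_range_succ] at h2n
  have hnn : (0:ℝ) ≤ (S.card.choose S.card : ℝ) := by positivity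
  linarith

lemma core (S K : Finset ℕ) (c : ℕ → ℕ → Bool) :
    ∑ A ∈ S.powerset, Mval S A (Tst K c A) ≤ 2 ^ S.card := by
  classical
  set N0 := (K ∪ S).sup id with hN0
  have chain : ∀ k, ∑ A ∈ S.powerset, Mval S A (max (Tst K c A) 0)
      ≤ ∑ A ∈ S.powerset, Mval S A (max (Tst K c A) k) := by
    intro k
    induction k with
    | zero => exact le_refl _
    | succ n ih => exact ih.trans (step S K c n)
  have h1 : ∑ A ∈ S.powerset, Mval S A (Tst K c A)
      = ∑ A ∈ S.powerset, Mval S A (max (Tst K c A) 0) := by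
    apply Finset.sum_congr rfl
    intro A hA
    rw [Nat.max_zero]
  have hTle : ∀ A, Tst K c A ≤ N0 := by
    intro A
    apply Finset.sup_le
    intro b hb
    exact Finset.le_sup (f := id) (mem_union_left _ (mem_filter.mp hb).1)
  have h2 : ∀ A ∈ S.powerset, Mval S A (max (Tst K c A) N0) = Mval S A N0 := by
    intro A hA
    rw [max_eq_right (hTle A)]
  have h3 : ∀ A ∈ S.powerset, Mval S A N0
      = ((A.card : ℝ) / (1 + ((S.card - A.card : ℕ) : ℝ))) := by
    intro A hA
    rw [mem_powerset] at hA
    have hSle : ∀ a ∈ S, a ≤ N0 := fun a ha => Finset.le_sup (f := id) (mem_union_right _ ha)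
    unfold Mval
    rw [cnt_of_forall_le hSle, cnt_of_forall_le (fun a ha => hSle a (hA ha))]
  calc ∑ A ∈ S.powerset, Mval S A (Tst K c A)
      ≤ ∑ A ∈ S.powerset, Mval S A (max (Tst K c A) N0) := h1 ▸ chain N0
    _ = ∑ A ∈ S.powerset, ((A.card : ℝ) / (1 + ((S.card - A.card : ℕ) : ℝ))) := by
        rw [Finset.sum_congr rfl h2, Finset.sum_congr rfl h3]
    _ ≤ 2 ^ S.card := final_sum S


noncomputable def khatB (K : Finset ℕ) (q : ℝ) (b : ℕ → Bool) : ℕ :=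
  (K.filter (fun k =>
    (1 + (((Finset.Icc 1 k).filter (fun l => ¬ b l = true)).card : ℝ)) /
      max (((Finset.Icc 1 k).filter (fun l => b l = true)).card : ℝ) 1 ≤ q)).sup id
noncomputable def VBd (H0 K : Finset ℕ) (q : ℝ) (b : ℕ → Bool) : ℕ :=
  ((Finset.Icc 1 (khatB K q b)).filter (fun l => l ∈ H0 ∧ b l = true)).card

noncomputable def RBd (K : Finset ℕ) (q : ℝ) (b : ℕ → Bool) : ℕ :=
  ((Finset.Icc 1 (khatB K q b)).filter (fun l => b l = true)).card

noncomputable def VmBd (H0 K : Finset ℕ) (q : ℝ) (b : ℕ → Bool) : ℕ :=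
  ((Finset.Icc 1 (khatB K q b)).filter (fun l => l ∈ H0 ∧ ¬ b l = true)).card

noncomputable def PhiB (H0 K : Finset ℕ) (q : ℝ) (b : ℕ → Bool) : ℝ :=
  (VBd H0 K q b : ℝ) / max (RBd K q b : ℝ) 1

lemma sup_id_mem (s : Finset ℕ) (h : s.Nonempty) : s.sup id ∈ s := by
  rw [← Finset.sup'_eq_sup h]
  exact Finset.sup'_mem (s : Set ℕ) (fun a ha b hb => by
    rcases le_total a b with h'|h'
    · rw [sup_eq_right.mpr h']; exact hb
    · rw [sup_eq_left.mpr h']; exact ha) s h id (fun b hb => hb)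

lemma card_Icc_filter_mem (A : Finset ℕ) (hA : ∀ l ∈ A, 1 ≤ l) (k : ℕ) :
    ((Finset.Icc 1 k).filter (fun l => l ∈ A)).card = cnt A k := by
  unfold cnt
  apply congrArg
  ext l
  simp only [mem_filter, mem_Icc]
  constructor
  · rintro ⟨⟨h1, h2⟩, h3⟩; exact ⟨h3, h2⟩
  · rintro ⟨h3, h2⟩; exact ⟨⟨hA l h3, h2⟩, h3⟩

lemma split_filter_card (s : Finset ℕ) (p r : ℕ → Prop) [DecidablePred p] [DecidablePred r] :
    (s.filter r).card = (s.filter (fun l => p l ∧ r l)).card + (s.filter (fun l => ¬ p l ∧ r l)).card := by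
  classical
  rw [← card_union_of_disjoint, ← filter_or]
  · apply congrArg
    apply filter_congr
    intro x _
    constructor
    · intro h; by_cases hp : p x
      · exact Or.inl ⟨hp, h⟩
      · exact Or.inr ⟨hp, h⟩
    · rintro (⟨_, h⟩|⟨_, h⟩) <;> exact h
  · rw [disjoint_left]
    intro a ha hb
    exact (mem_filter.mp hb).2.1 (mem_filter.mp ha).2.1

lemma arith {q v r d ac : ℝ} (hv : 0 ≤ v) (hd : 0 ≤ d) (hdac : d ≤ ac)
    (hcond : (1 + ac) / max r 1 ≤ q) : v / max r 1 ≤ q * (v / (1 + d)) := by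
  have hr : (0:ℝ) < max r 1 := lt_of_lt_of_le one_pos (le_max_right r 1)
  have h1 : 1 + ac ≤ q * max r 1 := (div_le_iff₀ hr).mp hcond
  have h2 : (0:ℝ) < 1 + d := by linarith
  rw [mul_div_assoc'] at *
  rw [div_le_div_iff₀ hr h2]
  calc v * (1 + d) ≤ v * (1 + ac) := by nlinarith
    _ ≤ v * (q * max r 1) := by nlinarith
    _ = q * v * max r 1 := by ring

lemma det (H0 K : Finset ℕ) (hH0 : ∀ l ∈ H0, 1 ≤ l) {q : ℝ} (hq0 : 0 ≤ q) (g : ℕ → Bool) :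
    ∑ A ∈ H0.powerset, PhiB H0 K q (fun l => if l ∈ H0 then decide (l ∈ A) else g l)
      ≤ q * 2 ^ H0.card := by
  classical
  set gcnt : ℕ → ℕ := fun k => ((Finset.Icc 1 k).filter (fun l => ¬ l ∈ H0 ∧ g l = true)).card
    with hgcnt
  set c : ℕ → ℕ → Bool := fun k a =>
    decide ((1 + ((k - (a + gcnt k) : ℕ) : ℝ)) / max ((a + gcnt k : ℕ) : ℝ) 1 ≤ q) with hc
  have main : ∀ A ∈ H0.powerset,
      PhiB H0 K q (fun l => if l ∈ H0 then decide (l ∈ A) else g l)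
        ≤ q * Mval H0 A (Tst K c A) := by
    intro A hA
    rw [mem_powerset] at hA
    set b : ℕ → Bool := fun l => if l ∈ H0 then decide (l ∈ A) else g l with hb
    have hA1 : ∀ l ∈ A, 1 ≤ l := fun l hl => hH0 l (hA hl)
    have hcount : ∀ k, ((Finset.Icc 1 k).filter (fun l => b l = true)).card
        = cnt A k + gcnt k := by
      intro k
      rw [split_filter_card (Finset.Icc 1 k) (fun l => l ∈ H0) (fun l => b l = true)]
      congr 1
      · rw [← card_Icc_filter_mem A hA1 k]
        apply congrArg
        apply filter_congr
        intro x _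
        simp only [hb]
        constructor
        · rintro ⟨h1, h2⟩
          rw [if_pos h1, decide_eq_true_eq] at h2
          exact h2
        · intro h
          have h1 := hA h
          exact ⟨h1, by rw [if_pos h1, decide_eq_true_eq]; exact h⟩
      · apply congrArg
        apply filter_congr
        intro x _
        simp only [hb]
        constructor
        · rintro ⟨h1, h2⟩
          rw [if_neg h1] at h2
          exact ⟨h1, h2⟩
        · rintro ⟨h1, h2⟩
          exact ⟨h1, by rw [if_neg h1]; exact h2⟩
    have hle : ∀ k, cnt A k + gcnt k ≤ k := by
      intro k
      rw [← hcount k]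
      calc ((Finset.Icc 1 k).filter (fun l => b l = true)).card
          ≤ (Finset.Icc 1 k).card := card_le_card (filter_subset _ _)
        _ = k := by rw [Nat.card_Icc]; omega
    have hcompl : ∀ k, ((Finset.Icc 1 k).filter (fun l => ¬ b l = true)).card
        = k - (cnt A k + gcnt k) := by
      intro k
      have h1 := card_filter_add_card_filter_not
        (s := Finset.Icc 1 k) (p := fun l => b l = true)
      rw [hcount k, Nat.card_Icc] at h1
      omega
    have hcond : ∀ k, ((1 + (((Finset.Icc 1 k).filter (fun l => ¬ b l = true)).card : ℝ)) /
        max (((Finset.Icc 1 k).filter (fun l => b l = true)).card : ℝ) 1 ≤ q)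
          ↔ c k (cnt A k) = true := by
      intro k
      rw [hcount k, hcompl k, hc, decide_eq_true_eq]
    have hkhat : khatB K q b = Tst K c A := by
      unfold khatB Tst
      congr 1
      apply filter_congr
      intro k _
      rw [hcond k]
    have hVB : VBd H0 K q b = cnt A (Tst K c A) := by
      unfold VBd
      rw [hkhat, ← card_Icc_filter_mem A hA1 (Tst K c A)]
      apply congrArg
      apply filter_congr
      intro x _
      simp only [hb]
      constructor
      · rintro ⟨h1, h2⟩
        rw [if_pos h1, decide_eq_true_eq] at h2
        exact h2
      · intro h
        have h1 := hA h
        exact ⟨h1, by rw [if_pos h1, decide_eq_true_eq]; exact h⟩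
    have hsum : cnt H0 (Tst K c A) = VBd H0 K q b + VmBd H0 K q b := by
      unfold VBd VmBd
      rw [hkhat, ← card_Icc_filter_mem H0 hH0 (Tst K c A)]
      exact split_filter_card (Finset.Icc 1 (Tst K c A)) (fun l => b l = true) (fun l => l ∈ H0)
        |>.trans (by
          congr 1
          · apply congrArg; apply filter_congr; intro x _; exact ⟨fun ⟨h1,h2⟩ => ⟨h2,h1⟩, fun ⟨h1,h2⟩ => ⟨h2,h1⟩⟩
          · apply congrArg; apply filter_congr; intro x _; exact ⟨fun ⟨h1,h2⟩ => ⟨h2,h1⟩, fun ⟨h1,h2⟩ => ⟨h2,h1⟩⟩)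
    have hRB : RBd K q b = cnt A (Tst K c A) + gcnt (Tst K c A) := by
      unfold RBd
      rw [hkhat]
      exact hcount (Tst K c A)
    -- now the inequality
    rcases Finset.eq_empty_or_nonempty (K.filter (fun k => c k (cnt A k) = true)) with hemp | hne
    · have hT0 : Tst K c A = 0 := by rw [Tst, hemp]; rfl
      have hcA0 : cnt A 0 = 0 := by
        unfold cnt
        rw [filter_false_of_mem, card_empty]
        intro x hx h
        have := hA1 x hx
        omega
      have hVB0 : VBd H0 K q b = 0 := by rw [hVB, hT0, hcA0]
      rw [PhiB, hVB0, Mval, hT0, hcA0]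
      simp only [Nat.cast_zero, zero_div, mul_zero, le_refl]
    · have hTmem : Tst K c A ∈ K.filter (fun k => c k (cnt A k) = true) := by
        rw [Tst]
        exact sup_id_mem _ hne
      have hcondT := (mem_filter.mp hTmem).2
      rw [hc, decide_eq_true_eq] at hcondT
      have hVmle : VmBd H0 K q b ≤ Tst K c A - (cnt A (Tst K c A) + gcnt (Tst K c A)) := by
        rw [← hcompl (Tst K c A), ← hkhat]
        unfold VmBd
        apply card_le_card
        apply Finset.monotone_filter_right
        intro x _ hx
        exact hx.2
      rw [PhiB, Mval, hVB, hRB]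
      have hd : ((cnt H0 (Tst K c A) - cnt A (Tst K c A) : ℕ) : ℝ)
          = (VmBd H0 K q b : ℝ) := by
        have h1 : cnt H0 (Tst K c A) - cnt A (Tst K c A) = VmBd H0 K q b := by
          have h2 := hsum
          rw [hVB] at h2
          omega
        rw [h1]
      rw [hd]
      have := arith (q := q) (v := (cnt A (Tst K c A) : ℝ))
        (r := ((cnt A (Tst K c A) + gcnt (Tst K c A) : ℕ) : ℝ))
        (d := (VmBd H0 K q b : ℝ))
        (ac := ((Tst K c A - (cnt A (Tst K c A) + gcnt (Tst K c A)) : ℕ) : ℝ))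
        (by positivity) (by positivity) (by exact_mod_cast hVmle) ?_
      · exact this
      · exact hcondT
  calc ∑ A ∈ H0.powerset, PhiB H0 K q (fun l => if l ∈ H0 then decide (l ∈ A) else g l)
      ≤ ∑ A ∈ H0.powerset, q * Mval H0 A (Tst K c A) := Finset.sum_le_sum main
    _ = q * ∑ A ∈ H0.powerset, Mval H0 A (Tst K c A) := by rw [Finset.mul_sum]
    _ ≤ q * 2 ^ H0.card := mul_le_mul_of_nonneg_left (core H0 K c) hq0


lemma sum_bool_powerset (S : Finset ℕ) (f : ({l // l ∈ S} → Bool) → ℝ) :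
    ∑ ε : {l // l ∈ S} → Bool, f ε = ∑ A ∈ S.powerset, f (fun l => decide (l.1 ∈ A)) := by
  classical
  have key : ∀ (ε : {l // l ∈ S} → Bool),
      (fun l : {l // l ∈ S} =>
        decide (l.1 ∈ S.filter (fun x => ∃ h : x ∈ S, ε ⟨x, h⟩ = true))) = ε := by
    intro ε
    funext l
    by_cases h : ε l = true
    · simp [mem_filter, l.2, Subtype.coe_eta, h]
    · simp only [Bool.not_eq_true] at h
      simp [mem_filter, l.2, Subtype.coe_eta, h]
  refine Finset.sum_bij' (fun ε _ => S.filter (fun l => ∃ h : l ∈ S, ε ⟨l, h⟩ = true))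
    (fun A _ => fun l => decide (l.1 ∈ A)) ?_ ?_ ?_ ?_ ?_
  · intro ε _
    exact mem_powerset.mpr (filter_subset _ _)
  · intro A _
    exact Finset.mem_univ _
  · intro ε _
    exact key ε
  · intro A hA
    rw [mem_powerset] at hA
    ext l
    simp only [mem_filter, decide_eq_true_eq]
    constructor
    · rintro ⟨h1, h2, h3⟩; exact h3
    · intro h; exact ⟨hA h, hA h, h⟩
  · intro ε _
    exact congrArg f (key ε).symm

lemma khatB_le (K : Finset ℕ) (N : ℕ) (hK : K ⊆ Finset.Icc 1 N) (q : ℝ) (b : ℕ → Bool) :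
    khatB K q b ≤ N := by
  apply Finset.sup_le
  intro k hk
  have := mem_Icc.mp (hK (mem_filter.mp hk).1)
  exact this.2

lemma PhiB_nonneg (H0 K : Finset ℕ) (q : ℝ) (b : ℕ → Bool) : 0 ≤ PhiB H0 K q b := by
  unfold PhiB
  apply div_nonneg (Nat.cast_nonneg _)
  exact le_trans zero_le_one (le_max_right _ _)

lemma PhiB_le (H0 K : Finset ℕ) (N : ℕ) (hK : K ⊆ Finset.Icc 1 N) (q : ℝ) (b : ℕ → Bool) :
    PhiB H0 K q b ≤ N := by
  unfold PhiB
  have h1 : VBd H0 K q b ≤ N := by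
    calc VBd H0 K q b ≤ (Finset.Icc 1 (khatB K q b)).card := card_le_card (filter_subset _ _)
      _ = khatB K q b := by rw [Nat.card_Icc]; omega
      _ ≤ N := khatB_le K N hK q b
  calc (VBd H0 K q b : ℝ) / max (RBd K q b : ℝ) 1 ≤ (VBd H0 K q b : ℝ) / 1 := by
        apply div_le_div_of_nonneg_left (Nat.cast_nonneg _) one_pos (le_max_right _ _)
    _ = (VBd H0 K q b : ℝ) := div_one _
    _ ≤ N := Nat.cast_le.mpr h1

lemma khatB_congr (K : Finset ℕ) (N : ℕ) (hK : K ⊆ Finset.Icc 1 N) (q : ℝ) {b b' : ℕ → Bool}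
    (h : ∀ l ∈ Finset.Icc 1 N, b l = b' l) : khatB K q b = khatB K q b' := by
  unfold khatB
  congr 1
  apply filter_congr
  intro k hk
  have hkN : k ≤ N := (mem_Icc.mp (hK hk)).2
  have e1 : (Finset.Icc 1 k).filter (fun l => ¬ b l = true)
      = (Finset.Icc 1 k).filter (fun l => ¬ b' l = true) := by
    apply filter_congr
    intro l hl
    have := mem_Icc.mp hl
    rw [h l (mem_Icc.mpr ⟨this.1, le_trans this.2 hkN⟩)]
  have e2 : (Finset.Icc 1 k).filter (fun l => b l = true)
      = (Finset.Icc 1 k).filter (fun l => b' l = true) := by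
    apply filter_congr
    intro l hl
    have := mem_Icc.mp hl
    rw [h l (mem_Icc.mpr ⟨this.1, le_trans this.2 hkN⟩)]
  rw [e1, e2]

lemma PhiB_congr (H0 K : Finset ℕ) (N : ℕ) (hK : K ⊆ Finset.Icc 1 N) (q : ℝ) {b b' : ℕ → Bool}
    (h : ∀ l ∈ Finset.Icc 1 N, b l = b' l) : PhiB H0 K q b = PhiB H0 K q b' := by
  have hk := khatB_congr K N hK q h
  have hN := khatB_le K N hK q b
  have congrIcc : ∀ (p p' : ℕ → Prop) [DecidablePred p] [DecidablePred p'],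
      (∀ l ∈ Finset.Icc 1 N, (p l ↔ p' l)) →
      (Finset.Icc 1 (khatB K q b)).filter p = (Finset.Icc 1 (khatB K q b')).filter p' := by
    intro p p' _ _ hpp
    rw [← hk]
    apply filter_congr
    intro l hl
    have := mem_Icc.mp hl
    exact hpp l (mem_Icc.mpr ⟨this.1, le_trans this.2 hN⟩)
  unfold PhiB VBd RBd
  rw [congrIcc (fun l => l ∈ H0 ∧ b l = true) (fun l => l ∈ H0 ∧ b' l = true)
      (fun l hl => by show l ∈ H0 ∧ b l = true ↔ l ∈ H0 ∧ b' l = true; rw [h l hl]),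
    congrIcc (fun l => b l = true) (fun l => b' l = true)
      (fun l hl => by show b l = true ↔ b' l = true; rw [h l hl])]


end SelSeqII
open scoped Classical
open MeasureTheory ProbabilityTheory Finset

theorem selective_seq_testing_II
    {Ω : Type*} [MeasurableSpace Ω] (μ : Measure Ω) [IsProbabilityMeasure μ]
    (N : ℕ) (P : ℕ → Ω → ℝ) (hmeas : ∀ l, Measurable (P l))
    (hval : ∀ l ∈ Finset.Icc 1 N, ∀ ω, P l ω = 1/2 ∨ P l ω = 1)
    (H0 : Finset ℕ) (hH0 : H0 ⊆ Finset.Icc 1 N)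
    -- null p-values are fair coins on {1/2, 1}
    (hnull : ∀ l ∈ H0, μ {ω | P l ω = 1/2} = 1/2 ∧ μ {ω | P l ω = 1} = 1/2)
    -- null p-values are jointly independent
    (hiid : iIndepFun (m := fun _ : {l // l ∈ H0} => (inferInstance : MeasurableSpace ℝ))
      (fun l : {l // l ∈ H0} => P l.1) μ)
    -- null p-values are independent of the non-null p-values
    (hindep : IndepFun (fun ω => fun l : {l // l ∈ H0} => P l.1 ω)
      (fun ω => fun l : {l // l ∈ Finset.Icc 1 N \ H0} => P l.1 ω) μ)
    (q : ℝ) (hq : q ∈ Set.Icc (0:ℝ) 1)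
    (K : Finset ℕ) (hK : K ⊆ Finset.Icc 1 N)
    (khat : Ω → ℕ)
    (hkhat : ∀ ω, khat ω =
      (K.filter (fun k =>
        (1 + (((Finset.Icc 1 k).filter (fun l => 1/2 < P l ω)).card : ℝ)) /
          (max (((Finset.Icc 1 k).filter (fun l => P l ω ≤ 1/2)).card : ℝ) 1) ≤ q)).sup id)
    (V R : Ω → ℕ)
    (hV : ∀ ω, V ω =
      ((Finset.Icc 1 (khat ω)).filter (fun l => l ∈ H0 ∧ P l ω ≤ 1/2)).card)
    (hR : ∀ ω, R ω = ((Finset.Icc 1 (khat ω)).filter (fun l => P l ω ≤ 1/2)).card) :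
    ∫ ω, (V ω : ℝ) / (max (R ω : ℝ) 1) ∂μ ≤ q := by
  classical
  set n := H0.card with hn
  set bity : ({l // l ∈ H0} → Bool) → ({l // l ∈ Finset.Icc 1 N \ H0} → Bool) → ℕ → Bool :=
    fun ε y l => if h : l ∈ H0 then ε ⟨l, h⟩
      else if h' : l ∈ Finset.Icc 1 N \ H0 then y ⟨l, h'⟩ else false with hbity
  set X : Ω → ({l // l ∈ H0} → Bool) := fun ω l => decide (P l.1 ω ≤ 1/2) with hX
  set Y : Ω → ({l // l ∈ Finset.Icc 1 N \ H0} → Bool) := fun ω l => decide (P l.1 ω ≤ 1/2)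
    with hY
  set Phi : ({l // l ∈ H0} → Bool) → ({l // l ∈ Finset.Icc 1 N \ H0} → Bool) → ℝ :=
    fun ε y => SelSeqII.PhiB H0 K q (bity ε y) with hPhi
  -- (1) pointwise agreement
  have hagree : ∀ ω, (V ω : ℝ) / max (R ω : ℝ) 1 = Phi (X ω) (Y ω) := by
    intro ω
    set bw : ℕ → Bool := fun l => decide (P l ω ≤ 1/2) with hbw
    have hbb : ∀ l ∈ Finset.Icc 1 N, bity (X ω) (Y ω) l = bw l := by
      intro l hl
      by_cases h : l ∈ H0
      · simp only [hbity, dif_pos h, hX, hbw]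
      · have h' : l ∈ Finset.Icc 1 N \ H0 := Finset.mem_sdiff.mpr ⟨hl, h⟩
        simp only [hbity, dif_neg h, dif_pos h', hY, hbw]
    have hbprop : ∀ l, (bw l = true ↔ P l ω ≤ 1/2) := fun l => by
      simp only [hbw, decide_eq_true_eq]
    have hkB : khat ω = SelSeqII.khatB K q bw := by
      rw [hkhat ω]
      unfold SelSeqII.khatB
      congr 1
      apply filter_congr
      intro k _
      have e1 : (Finset.Icc 1 k).filter (fun l => 1/2 < P l ω)
          = (Finset.Icc 1 k).filter (fun l => ¬ bw l = true) := by
        apply filter_congr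
        intro l _
        rw [hbprop l, not_le]
      have e2 : (Finset.Icc 1 k).filter (fun l => P l ω ≤ 1/2)
          = (Finset.Icc 1 k).filter (fun l => bw l = true) := by
        apply filter_congr
        intro l _
        rw [hbprop l]
      rw [e1, e2]
    have hVB : V ω = SelSeqII.VBd H0 K q bw := by
      rw [hV ω]
      unfold SelSeqII.VBd
      rw [← hkB]
      apply congrArg
      apply filter_congr
      intro l _
      rw [hbprop l]
    have hRB : R ω = SelSeqII.RBd K q bw := by
      rw [hR ω]
      unfold SelSeqII.RBd
      rw [← hkB]
      apply congrArg
      apply filter_congr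
      intro l _
      rw [hbprop l]
    rw [hVB, hRB, hPhi]
    exact (SelSeqII.PhiB_congr H0 K N hK q hbb).symm
  -- (2) deterministic bound for fixed y
  have hdetB : ∀ y, ∑ ε : ({l // l ∈ H0} → Bool), Phi ε y ≤ q * 2 ^ n := by
    intro y
    rw [SelSeqII.sum_bool_powerset H0 (fun ε => Phi ε y)]
    set g : ℕ → Bool := fun l => if h' : l ∈ Finset.Icc 1 N \ H0 then y ⟨l, h'⟩ else false
      with hg
    have heq : ∀ A ∈ H0.powerset, Phi (fun l => decide (l.1 ∈ A)) y
        = SelSeqII.PhiB H0 K q (fun l => if l ∈ H0 then decide (l ∈ A) else g l) := by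
      intro A _
      rw [hPhi]
      apply congrArg
      funext l
      by_cases h : l ∈ H0
      · simp only [hbity, dif_pos h, if_pos h]
      · simp only [hbity, dif_neg h, if_neg h, hg]
    rw [Finset.sum_congr rfl heq]
    exact SelSeqII.det H0 K (fun l hl => (Finset.mem_Icc.mp (hH0 hl)).1) hq.1 g
  -- measurability of bool maps
  have hdec : Measurable (fun r : ℝ => decide (r ≤ 1/2)) := by
    have e : (fun r : ℝ => decide (r ≤ 1/2)) = fun r => if r ≤ 1/2 then true else false := by
      funext r; by_cases h : r ≤ 1/2 <;> simp [h]
    rw [e]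
    exact Measurable.ite (measurableSet_le measurable_id measurable_const)
      measurable_const measurable_const
  have hmeasRbool : ∀ (l : ℕ), Measurable (fun ω => decide (P l ω ≤ 1/2) : Ω → Bool) :=
    fun l => hdec.comp (hmeas l)
  have hXm : Measurable X := measurable_pi_lambda _ (fun l => hmeasRbool l.1)
  have hYm : Measurable Y := measurable_pi_lambda _ (fun l => hmeasRbool l.1)
  -- independence of X and Y
  have hXY : IndepFun X Y μ := by
    have hφ : Measurable (fun v : {l // l ∈ H0} → ℝ => fun l => decide (v l ≤ 1/2)) :=
      measurable_pi_lambda _ (fun l => hdec.comp (measurable_pi_apply l))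
    have hψ : Measurable
        (fun v : {l // l ∈ Finset.Icc 1 N \ H0} → ℝ => fun l => decide (v l ≤ 1/2)) :=
      measurable_pi_lambda _ (fun l => hdec.comp (measurable_pi_apply l))
    exact hindep.comp hφ hψ
  -- iIndep of coordinates of X
  have hiidX : iIndepFun (m := fun _ : {l // l ∈ H0} => (inferInstance : MeasurableSpace Bool))
      (fun l : {l // l ∈ H0} => fun ω => X ω l) μ := by
    exact hiid.comp (fun _ => fun r : ℝ => decide (r ≤ 1/2)) (fun _ => hdec)
  -- event probabilities
  have hprob : ∀ ε : ({l // l ∈ H0} → Bool), μ {ω | X ω = ε} = (1/2 : ENNReal) ^ n := by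
    intro ε
    have hset : {ω | X ω = ε} = ⋂ l : {l // l ∈ H0}, {ω | X ω l = ε l} := by
      ext ω
      simp only [Set.mem_setOf_eq, Set.mem_iInter, funext_iff]
    rw [hset]
    have hmi := hiidX.meas_iInter (s := fun l => {ω | X ω l = ε l})
      (fun l => ⟨{ε l}, trivial, rfl⟩)
    rw [hmi]
    have hfac : ∀ l : {l // l ∈ H0}, μ {ω | X ω l = ε l} = (1/2 : ENNReal) := by
      intro l
      have hvl := hval l.1 (hH0 l.2)
      by_cases hb : ε l = true
      · have e : {ω | X ω l = ε l} = {ω | P l.1 ω = 1/2} := by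
          ext ω
          simp only [Set.mem_setOf_eq, hX, hb, decide_eq_true_eq]
          rcases hvl ω with h | h <;> rw [h] <;> norm_num
        rw [e]
        exact (hnull l.1 l.2).1
      · rw [Bool.not_eq_true] at hb
        have e : {ω | X ω l = ε l} = {ω | P l.1 ω = 1} := by
          ext ω
          simp only [Set.mem_setOf_eq, hX, hb, decide_eq_false_iff_not, not_le]
          rcases hvl ω with h | h <;> rw [h] <;> norm_num
        rw [e]
        exact (hnull l.1 l.2).2
    rw [Finset.prod_congr rfl (fun l _ => hfac l)]
    rw [Finset.prod_const]
    congr 1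
    rw [Finset.card_univ, Fintype.card_coe]
  -- integrand functions
  set Ie : ({l // l ∈ H0} → Bool) → Ω → ℝ := fun ε ω => if X ω = ε then (1:ℝ) else 0 with hIe
  set Ge : ({l // l ∈ H0} → Bool) → Ω → ℝ := fun ε ω => Phi ε (Y ω) with hGe
  have hGm : ∀ ε, Measurable (Ge ε) := fun ε => (Measurable.of_discrete (f := Phi ε)).comp hYm
  have hIm : ∀ ε, Measurable (Ie ε) := by
    intro ε
    exact Measurable.ite (hXm (MeasurableSet.singleton ε)) measurable_const measurable_const
  have hPhiN : ∀ ε y, 0 ≤ Phi ε y ∧ Phi ε y ≤ N := fun ε y =>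
    ⟨SelSeqII.PhiB_nonneg H0 K q _, SelSeqII.PhiB_le H0 K N hK q _⟩
  have hGint : ∀ ε, Integrable (Ge ε) μ := by
    intro ε
    apply Integrable.mono' (integrable_const (N:ℝ)) (hGm ε).aestronglyMeasurable
    apply ae_of_all
    intro ω
    rw [Real.norm_eq_abs, abs_of_nonneg (hPhiN ε (Y ω)).1]
    exact (hPhiN ε (Y ω)).2
  have hIint : ∀ ε, Integrable (Ie ε) μ := by
    intro ε
    apply Integrable.mono' (integrable_const (1:ℝ)) (hIm ε).aestronglyMeasurable
    apply ae_of_all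
    intro ω
    rw [Real.norm_eq_abs, hIe]
    by_cases h : X ω = ε <;> simp [h]
  have hIGint : ∀ ε, Integrable (fun ω => Ie ε ω * Ge ε ω) μ := by
    intro ε
    apply Integrable.mono' (integrable_const (N:ℝ)) ((hIm ε).mul (hGm ε)).aestronglyMeasurable
    apply ae_of_all
    intro ω
    rw [Real.norm_eq_abs, Pi.mul_apply, abs_mul, hIe]
    by_cases h : X ω = ε
    · simp only [if_pos h, abs_one, one_mul]
      rw [abs_of_nonneg (hPhiN ε (Y ω)).1]
      exact (hPhiN ε (Y ω)).2
    · simp only [if_neg h, abs_zero, zero_mul]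
      positivity
  -- split the integral
  have hsplit : (fun ω => (V ω : ℝ) / max (R ω : ℝ) 1)
      = fun ω => ∑ ε : ({l // l ∈ H0} → Bool), Ie ε ω * Ge ε ω := by
    funext ω
    rw [hagree ω]
    have e : ∀ ε : ({l // l ∈ H0} → Bool),
        Ie ε ω * Ge ε ω = if X ω = ε then Phi ε (Y ω) else 0 := by
      intro ε
      rw [hIe, hGe]
      by_cases h : X ω = ε <;> simp [h]
    rw [Finset.sum_congr rfl (fun ε _ => e ε)]
    rw [Finset.sum_ite_eq (Finset.univ) (X ω) (fun ε => Phi ε (Y ω))]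
    rw [if_pos (Finset.mem_univ _)]
  rw [hsplit]
  rw [integral_finset_sum _ (fun ε _ => hIGint ε)]
  -- compute each term
  have hterm : ∀ ε : ({l // l ∈ H0} → Bool),
      ∫ ω, Ie ε ω * Ge ε ω ∂μ = ((1:ℝ)/2)^n * ∫ ω, Ge ε ω ∂μ := by
    intro ε
    have hind : IndepFun (Ie ε) (Ge ε) μ := by
      exact hXY.comp (φ := fun x => if x = ε then (1:ℝ) else 0) (ψ := fun y => Phi ε y)
        Measurable.of_discrete Measurable.of_discrete
    have hmul : ∫ ω, Ie ε ω * Ge ε ω ∂μ = (∫ ω, Ie ε ω ∂μ) * ∫ ω, Ge ε ω ∂μ :=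
      hind.integral_fun_mul_eq_mul_integral (hIint ε).aestronglyMeasurable (hGint ε).aestronglyMeasurable
    rw [hmul]
    congr 1
    have e : Ie ε = Set.indicator {ω | X ω = ε} (fun _ => (1:ℝ)) := by
      funext ω
      rw [hIe]
      by_cases h : X ω = ε <;> simp [Set.indicator, h]
    have hms : MeasurableSet {ω | X ω = ε} := hXm (MeasurableSet.singleton ε)
    have e2 : ((1/2 : ENNReal) ^ n).toReal = ((1:ℝ)/2)^n := by
      rw [ENNReal.toReal_pow]
      norm_num
    rw [e, integral_indicator_const (1:ℝ) hms, Measure.real, hprob ε, e2, smul_eq_mul, mul_one]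
  rw [Finset.sum_congr rfl (fun ε _ => hterm ε)]
  rw [← Finset.mul_sum]
  rw [← integral_finset_sum _ (fun ε _ => hGint ε)]
  have hfinal : ∫ ω, (∑ ε : ({l // l ∈ H0} → Bool), Ge ε ω) ∂μ ≤ q * 2 ^ n := by
    have hle : ∀ ω, (∑ ε : ({l // l ∈ H0} → Bool), Ge ε ω) ≤ q * 2 ^ n := fun ω => hdetB (Y ω)
    calc ∫ ω, (∑ ε : ({l // l ∈ H0} → Bool), Ge ε ω) ∂μ
        ≤ ∫ _, (q * 2 ^ n : ℝ) ∂μ := by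
          apply integral_mono (integrable_finset_sum _ (fun ε _ => hGint ε))
            (integrable_const _)
          exact hle
      _ = q * 2 ^ n := by rw [integral_const, Measure.real, measure_univ, ENNReal.toReal_one, one_smul]
  calc ((1:ℝ)/2)^n * ∫ ω, (∑ ε : ({l // l ∈ H0} → Bool), Ge ε ω) ∂μ
      ≤ ((1:ℝ)/2)^n * (q * 2 ^ n) := by
        apply mul_le_mul_of_nonneg_left hfinal (by positivity)
    _ = q := by
        have h2 : (2:ℝ)^n ≠ 0 := by positivity
        field_simp
        rw [mul_comm, ← mul_assoc, ← mul_pow]; norm_num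
end

section
/- Let (B_l)_{l=1}^{m} be i.i.d. Bernoulli(1/2) random variables and let τ be a stopping time with respect to the reverse filtration generated by the partial counts (i.e., τ is a random index measurable appropriately). Then E[ #{l ≤ τ : B_l = 1} / (1 + #{l ≤ τ : B_l = 0}) ] ≤ 1. -/
open scoped Classical ENNReal
open MeasureTheory ProbabilityTheory Finset

namespace KnockoffAux

variable {Ω : Type*} [MeasurableSpace Ω] (μ : Measure Ω) [IsProbabilityMeasure μ]
  (B : ℕ → Ω → Bool)

lemma meas_card (hmeas : ∀ l, Measurable (B l)) (n : ℕ) :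
    Measurable fun ω => ((Icc 1 n).filter (fun i => B i ω = true)).card := by
  simp only [Finset.card_filter]
  refine Finset.measurable_sum _ fun i _ => Measurable.ite ?_ measurable_const measurable_const
  exact (hmeas i) (measurableSet_singleton true)

lemma atom_eq (n : ℕ) (T : Finset ℕ) (hT : T ⊆ Icc 1 n) :
    {ω | (Icc 1 n).filter (fun i => B i ω = true) = T}
      = ⋂ i ∈ Icc 1 n, B i ⁻¹' {if i ∈ T then true else false} := by
  ext ω
  simp only [Set.mem_setOf_eq, Set.mem_iInter, Set.mem_preimage, Set.mem_singleton_iff,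
    Finset.ext_iff, Finset.mem_filter]
  constructor
  · intro h i hi
    by_cases hiT : i ∈ T
    · simpa [hiT] using ((h i).2 hiT).2
    · simp only [hiT, if_false]
      by_contra hB
      exact hiT ((h i).1 ⟨hi, by simpa using hB⟩)
  · intro h a
    constructor
    · rintro ⟨ha, hB⟩
      have := h a ha
      by_cases haT : a ∈ T
      · exact haT
      · simp [haT] at this; simp [this] at hB
    · intro haT
      refine ⟨hT haT, ?_⟩
      simpa [haT] using h a (hT haT)

lemma atom_measure (hiid : iIndepFun B μ)
    (hmeas : ∀ l, Measurable (B l)) (hber : ∀ l, μ {ω | B l ω = true} = 1/2)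
    (n : ℕ) (T : Finset ℕ) (hT : T ⊆ Icc 1 n) :
    μ {ω | (Icc 1 n).filter (fun i => B i ω = true) = T} = 2⁻¹ ^ n := by
  rw [atom_eq B n T hT]
  rw [hiid.meas_biInter (S := Icc 1 n)
    (s := fun i => B i ⁻¹' {if i ∈ T then true else false})
    (fun i _ => MeasurableSpace.measurableSet_comap.2 ⟨_, trivial, rfl⟩)]
  have h2 : ∀ i, μ (B i ⁻¹' {if i ∈ T then true else false}) = 2⁻¹ := by
    intro i
    have htrue : μ (B i ⁻¹' {true}) = 2⁻¹ := by
      rw [show B i ⁻¹' {true} = {ω | B i ω = true} from rfl, hber i, one_div]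
    by_cases hiT : i ∈ T
    · simpa [hiT] using htrue
    · have hset : B i ⁻¹' {false} = (B i ⁻¹' {true})ᶜ := by
        ext ω; simp [Bool.not_eq_true]
      simp only [hiT, if_false, hset]
      rw [prob_compl_eq_one_sub ((hmeas i) (measurableSet_singleton true)), htrue,
        ENNReal.one_sub_inv_two]
  rw [Finset.prod_congr rfl (fun i _ => h2 i), Finset.prod_const, Nat.card_Icc]
  norm_num

lemma slice_indep (hiid : iIndepFun B μ)
    (hmeas : ∀ l, Measurable (B l)) (n : ℕ) {D A : Set Ω}
    (hD : MeasurableSet[⨆ i ∈ {i : ℕ | n < i}, MeasurableSpace.comap (B i) inferInstance] D)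
    (hA : MeasurableSet[⨆ i ∈ (↑(Icc 1 n) : Set ℕ), MeasurableSpace.comap (B i) inferInstance] A) :
    μ (D ∩ A) = μ D * μ A := by
  have hdisj : Disjoint {i : ℕ | n < i} (↑(Icc 1 n) : Set ℕ) := by
    rw [Set.disjoint_left]
    intro i hi hi'
    simp only [Finset.coe_Icc, Set.mem_Icc] at hi'
    simp only [Set.mem_setOf_eq] at hi
    omega
  have h := indep_iSup_of_disjoint (fun i => (hmeas i).comap_le) hiid.iIndep hdisj
  exact (Indep_iff _ _ _).1 h D A hD hA


lemma level_measure (hiid : iIndepFun B μ)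
    (hmeas : ∀ l, Measurable (B l)) (hber : ∀ l, μ {ω | B l ω = true} = 1/2) (n s : ℕ) :
    μ {ω | ((Icc 1 n).filter (fun i => B i ω = true)).card = s}
      = (Nat.choose n s : ℝ≥0∞) * 2⁻¹ ^ n := by
  have hdec : {ω | ((Icc 1 n).filter (fun i => B i ω = true)).card = s}
      = ⋃ T ∈ powersetCard s (Icc 1 n), {ω | (Icc 1 n).filter (fun i => B i ω = true) = T} := by
    ext ω
    simp only [Set.mem_setOf_eq, Set.mem_iUnion]
    constructor
    · intro h
      exact ⟨_, Finset.mem_powersetCard.2 ⟨Finset.filter_subset _ _, h⟩, rfl⟩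
    · rintro ⟨T, hT, h⟩
      show ((Icc 1 n).filter (fun i => B i ω = true)).card = s
      rw [h]
      exact (Finset.mem_powersetCard.1 hT).2
  have hatomamb : ∀ T : Finset ℕ, T ⊆ Icc 1 n →
      MeasurableSet {ω | (Icc 1 n).filter (fun i => B i ω = true) = T} := by
    intro T hT
    rw [atom_eq B n T hT]
    refine MeasurableSet.biInter (Set.to_countable _) fun i _ => ?_
    exact (hmeas i) (measurableSet_singleton _)
  rw [hdec, measure_biUnion_finset ?_ ?_]
  · rw [Finset.sum_congr rfl (fun T hT =>
      atom_measure μ B hiid hmeas hber n T (Finset.mem_powersetCard.1 hT).1),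
      Finset.sum_const, Finset.card_powersetCard, Nat.card_Icc, nsmul_eq_mul]
    norm_num
  · intro T hT T' hT' hne
    simp only [Function.onFun]
    apply Set.disjoint_left.2
    rintro ω h1 h2
    simp only [Set.mem_setOf_eq] at h1 h2
    exact hne (h1 ▸ h2 ▸ rfl)
  · intro T hT
    exact hatomamb T (Finset.mem_powersetCard.1 hT).1

lemma key_count (hiid : iIndepFun B μ)
    (hmeas : ∀ l, Measurable (B l)) (hber : ∀ l, μ {ω | B l ω = true} = 1/2) (n : ℕ) (hn : 1 ≤ n) (s : ℕ) (A : Set Ω)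
    (hA : MeasurableSet[MeasurableSpace.comap
       (fun ω => fun j : ℕ => if n ≤ j then ((Icc 1 j).filter (fun i => B i ω = true)).card else 0)
       (inferInstance : MeasurableSpace (ℕ → ℕ))] A) :
    (n : ℝ≥0∞) * μ (A ∩ {ω | ((Icc 1 n).filter (fun i => B i ω = true)).card = s}
        ∩ {ω | B n ω = true})
      = (s : ℝ≥0∞) * μ (A ∩ {ω | ((Icc 1 n).filter (fun i => B i ω = true)).card = s}) := by
  obtain ⟨E, hE, rfl⟩ := MeasurableSpace.measurableSet_comap.1 hA
  set F : Ω → ℕ → ℕ :=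
    fun ω => fun j : ℕ => if n ≤ j then ((Icc 1 j).filter (fun i => B i ω = true)).card else 0
    with hF
  set H : Ω → ℕ → ℕ :=
    fun ω => fun j : ℕ => if n ≤ j then s + ((Ioc n j).filter (fun i => B i ω = true)).card else 0
    with hH
  set Sp : Ω → ℕ := fun ω => ((Icc 1 n).filter (fun i => B i ω = true)).card with hSp
  -- on {Sp = s}, F = H
  have hFH : ∀ ω, Sp ω = s → F ω = H ω := by
    intro ω hs
    funext j
    simp only [hF, hH]
    by_cases hj : n ≤ j
    · simp only [hj, if_true]
      have hsplit : Icc 1 j = Icc 1 n ∪ Ioc n j := by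
        ext x; simp only [Finset.mem_union, Finset.mem_Icc, Finset.mem_Ioc]; omega
      have hdisj : Disjoint (Icc 1 n) (Ioc n j) := by
        rw [Finset.disjoint_left]
        intro x hx hx'
        simp only [Finset.mem_Icc] at hx
        simp only [Finset.mem_Ioc] at hx'
        omega
      rw [hsplit, Finset.filter_union,
        Finset.card_union_of_disjoint (Finset.disjoint_filter_filter hdisj), ← hs]
    · simp [hj]
  have hAcap : F ⁻¹' E ∩ {ω | Sp ω = s} = H ⁻¹' E ∩ {ω | Sp ω = s} := by
    ext ω
    simp only [Set.mem_inter_iff, Set.mem_preimage, Set.mem_setOf_eq]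
    constructor
    · rintro ⟨h1, h2⟩; exact ⟨by rwa [← hFH ω h2], h2⟩
    · rintro ⟨h1, h2⟩; exact ⟨by rwa [hFH ω h2], h2⟩
  -- H⁻¹E is measurable w.r.t. the tail σ-algebra
  have hBiM : ∀ i, n < i → Measurable[⨆ i ∈ {i : ℕ | n < i},
      MeasurableSpace.comap (B i) inferInstance] (B i) := by
    intro i hi
    have h1 : Measurable[MeasurableSpace.comap (B i) inferInstance] (B i) :=
      measurable_iff_comap_le.2 le_rfl
    exact h1.mono (le_iSup₂ (f := fun i (_ : i ∈ {i : ℕ | n < i}) =>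
      MeasurableSpace.comap (B i) inferInstance) i hi) le_rfl
  have hHM : Measurable[⨆ i ∈ {i : ℕ | n < i},
      MeasurableSpace.comap (B i) inferInstance] H := by
    refine (@measurable_pi_iff Ω ℕ (fun _ => ℕ)
      (⨆ i ∈ {i : ℕ | n < i}, MeasurableSpace.comap (B i) inferInstance)
      (fun _ => inferInstance) H).mpr fun j => ?_
    by_cases hj : n ≤ j
    · simp only [hH, hj, if_true]
      apply Measurable.add measurable_const
      simp only [Finset.card_filter]
      apply Finset.measurable_sum
      intro i hi
      have hni : n < i := (Finset.mem_Ioc.1 hi).1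
      exact Measurable.ite ((hBiM i hni) (measurableSet_singleton true))
        measurable_const measurable_const
    · simp only [hH, hj, if_false]; exact measurable_const
  have hDM : MeasurableSet[⨆ i ∈ {i : ℕ | n < i},
      MeasurableSpace.comap (B i) inferInstance] (H ⁻¹' E) := hHM hE
  have hDamb : MeasurableSet (H ⁻¹' E) :=
    (iSup₂_le fun i _ => (hmeas i).comap_le :
      (⨆ i ∈ {i : ℕ | n < i}, MeasurableSpace.comap (B i) inferInstance) ≤ _) _ hDM
  -- atoms
  have hatomM : ∀ T : Finset ℕ, T ⊆ Icc 1 n →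
      MeasurableSet[⨆ i ∈ (↑(Icc 1 n) : Set ℕ), MeasurableSpace.comap (B i) inferInstance]
        {ω | (Icc 1 n).filter (fun i => B i ω = true) = T} := by
    intro T hT
    rw [atom_eq B n T hT]
    refine MeasurableSet.biInter (Set.to_countable _) fun i hi => ?_
    have h1 : MeasurableSet[MeasurableSpace.comap (B i) inferInstance]
        (B i ⁻¹' {if i ∈ T then true else false}) :=
      MeasurableSpace.measurableSet_comap.2 ⟨_, trivial, rfl⟩
    exact le_iSup₂ (f := fun i (_ : i ∈ (↑(Icc 1 n) : Set ℕ)) =>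
      MeasurableSpace.comap (B i) inferInstance) i (Finset.mem_coe.2 hi) _ h1
  have hatomamb : ∀ T : Finset ℕ, T ⊆ Icc 1 n →
      MeasurableSet {ω | (Icc 1 n).filter (fun i => B i ω = true) = T} := by
    intro T hT
    exact (iSup₂_le fun i _ => (hmeas i).comap_le) _ (hatomM T hT)
  -- measure of H⁻¹E ∩ union of atoms
  have hmain : ∀ P : Finset (Finset ℕ), P ⊆ powersetCard s (Icc 1 n) →
      μ (H ⁻¹' E ∩ ⋃ T ∈ P, {ω | (Icc 1 n).filter (fun i => B i ω = true) = T})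
        = P.card * (μ (H ⁻¹' E) * 2⁻¹ ^ n) := by
    intro P hP
    have hsub : ∀ T ∈ P, T ⊆ Icc 1 n := by
      intro T hT
      exact (Finset.mem_powersetCard.1 (hP hT)).1
    rw [Set.inter_iUnion₂]
    rw [measure_biUnion_finset ?_ ?_]
    · rw [Finset.sum_congr rfl (fun T hT => ?_), Finset.sum_const, nsmul_eq_mul]
      rw [slice_indep μ B hiid hmeas n hDM (hatomM T (hsub T hT)), atom_measure μ B hiid hmeas hber n T (hsub T hT)]
    · intro T hT T' hT' hne
      simp only [Function.onFun]
      apply Set.disjoint_left.2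
      rintro ω ⟨-, h1⟩ ⟨-, h2⟩
      simp only [Set.mem_setOf_eq] at h1 h2
      exact hne (h1 ▸ h2 ▸ rfl)
    · intro T hT
      exact hDamb.inter (hatomamb T (hsub T hT))
  -- decomposition of the level sets into atoms
  have hdec : {ω | Sp ω = s}
      = ⋃ T ∈ powersetCard s (Icc 1 n), {ω | (Icc 1 n).filter (fun i => B i ω = true) = T} := by
    ext ω
    simp only [Set.mem_setOf_eq, Set.mem_iUnion]
    constructor
    · intro h
      exact ⟨_, Finset.mem_powersetCard.2 ⟨Finset.filter_subset _ _, h⟩, rfl⟩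
    · rintro ⟨T, hT, h⟩
      show ((Icc 1 n).filter (fun i => B i ω = true)).card = s
      rw [h]
      exact (Finset.mem_powersetCard.1 hT).2
  have hdec2 : {ω | Sp ω = s} ∩ {ω | B n ω = true}
      = ⋃ T ∈ (powersetCard s (Icc 1 n)).filter (fun T => n ∈ T),
          {ω | (Icc 1 n).filter (fun i => B i ω = true) = T} := by
    ext ω
    simp only [Set.mem_inter_iff, Set.mem_setOf_eq, Set.mem_iUnion]
    constructor
    · rintro ⟨h1, h2⟩
      refine ⟨_, Finset.mem_filter.2 ⟨Finset.mem_powersetCard.2 ⟨Finset.filter_subset _ _, h1⟩,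
        Finset.mem_filter.2 ⟨Finset.mem_Icc.2 ⟨hn, le_rfl⟩, h2⟩⟩, rfl⟩
    · rintro ⟨T, hT, h⟩
      rw [Finset.mem_filter] at hT
      constructor
      · show ((Icc 1 n).filter (fun i => B i ω = true)).card = s
        rw [h]
        exact (Finset.mem_powersetCard.1 hT.1).2
      · have : n ∈ (Icc 1 n).filter (fun i => B i ω = true) := h ▸ hT.2
        exact (Finset.mem_filter.1 this).2
  -- compute the two measures
  have hmeasL : μ (F ⁻¹' E ∩ {ω | Sp ω = s} ∩ {ω | B n ω = true})
      = ((powersetCard s (Icc 1 n)).filter (fun T => n ∈ T)).card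
          * (μ (H ⁻¹' E) * 2⁻¹ ^ n) := by
    rw [Set.inter_assoc, show F ⁻¹' E ∩ ({ω | Sp ω = s} ∩ {ω | B n ω = true})
        = H ⁻¹' E ∩ ({ω | Sp ω = s} ∩ {ω | B n ω = true}) by
      rw [← Set.inter_assoc, hAcap, Set.inter_assoc], hdec2]
    exact hmain _ (Finset.filter_subset _ _)
  have hmeasR : μ (F ⁻¹' E ∩ {ω | Sp ω = s})
      = (Nat.choose n s : ℕ) * (μ (H ⁻¹' E) * 2⁻¹ ^ n) := by
    rw [hAcap, hdec, hmain _ (Finset.Subset.refl _), Finset.card_powersetCard, Nat.card_Icc]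
    norm_num
  -- the counting identity
  have hQcard : n * ((powersetCard s (Icc 1 n)).filter (fun T => n ∈ T)).card
      = s * Nat.choose n s := by
    rcases Nat.eq_zero_or_pos s with hs0 | hs1
    · subst hs0
      have : (powersetCard 0 (Icc 1 n)).filter (fun T => n ∈ T) = ∅ := by
        apply Finset.eq_empty_of_forall_notMem
        intro T hT
        rw [Finset.mem_filter, Finset.mem_powersetCard] at hT
        have := Finset.card_eq_zero.1 hT.1.2
        subst this
        exact absurd hT.2 (Finset.notMem_empty n)
      rw [this, Finset.card_empty, Nat.mul_zero, Nat.zero_mul]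
    · have hbij : ((powersetCard s (Icc 1 n)).filter (fun T => n ∈ T)).card
          = (powersetCard (s-1) (Icc 1 (n-1))).card := by
        refine Finset.card_bij (fun T _ => T.erase n) ?_ ?_ ?_
        · intro T hT
          rw [Finset.mem_filter, Finset.mem_powersetCard] at hT
          refine Finset.mem_powersetCard.2 ⟨?_, ?_⟩
          · intro x hx
            rw [Finset.mem_erase] at hx
            have := hT.1.1 hx.2
            rw [Finset.mem_Icc] at this ⊢
            have := hx.1
            omega
          · rw [Finset.card_erase_of_mem hT.2, hT.1.2]
        · intro T1 h1 T2 h2 heq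
          rw [Finset.mem_filter] at h1 h2
          have heq' : T1.erase n = T2.erase n := heq
          rw [← Finset.insert_erase h1.2, heq', Finset.insert_erase h2.2]
        · intro T' hT'
          rw [Finset.mem_powersetCard] at hT'
          have hnT' : n ∉ T' := by
            intro h
            have := hT'.1 h
            rw [Finset.mem_Icc] at this
            omega
          refine ⟨insert n T', Finset.mem_filter.2 ⟨Finset.mem_powersetCard.2 ⟨?_, ?_⟩,
            Finset.mem_insert_self n T'⟩, Finset.erase_insert hnT'⟩
          · refine Finset.insert_subset (Finset.mem_Icc.2 ⟨hn, le_rfl⟩) ?_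
            exact hT'.1.trans (Finset.Icc_subset_Icc_right (by omega))
          · rw [Finset.card_insert_of_notMem hnT', hT'.2]
            omega
      rw [hbij, Finset.card_powersetCard, Nat.card_Icc]
      have h1 : n - 1 + 1 - 1 = n - 1 := by omega
      rw [h1]
      obtain ⟨n', rfl⟩ : ∃ n', n = n' + 1 := ⟨n - 1, by omega⟩
      obtain ⟨s', rfl⟩ : ∃ s', s = s' + 1 := ⟨s - 1, by omega⟩
      simpa [mul_comm] using Nat.add_one_mul_choose_eq n' s'
  -- conclude
  rw [hmeasL, hmeasR, ← mul_assoc, ← Nat.cast_mul, hQcard, Nat.cast_mul, mul_assoc]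

end KnockoffAux
section MainProof

open scoped Classical ENNReal
open MeasureTheory ProbabilityTheory Finset KnockoffAux

set_option maxHeartbeats 1000000 in
theorem knockoff_martingale_inequality
    {Ω : Type*} [MeasurableSpace Ω] (μ : Measure Ω) [IsProbabilityMeasure μ]
    (m : ℕ) (B : ℕ → Ω → Bool) (hmeas : ∀ l, Measurable (B l))
    -- i.i.d. Bernoulli(1/2)
    (hiid : iIndepFun B μ)
    (hber : ∀ l, μ {ω | B l ω = true} = 1/2)
    -- running counts of ones among the first l coordinates
    (S : ℕ → Ω → ℕ)
    (hS : ∀ l ω, S l ω = ((Finset.Icc 1 l).filter (fun i => B i ω = true)).card)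
    -- reverse filtration: G k is generated by the counts S_j for j ≥ k
    (G : ℕ → MeasurableSpace Ω)
    (hG : ∀ k, G k = MeasurableSpace.comap
      (fun ω => fun j : ℕ => if k ≤ j then S j ω else 0) inferInstance)
    -- τ is a stopping time in reverse time: {τ = k} is G k-measurable
    (τ : Ω → ℕ) (hτle : ∀ ω, τ ω ≤ m)
    (hτ : ∀ k, MeasurableSet[G k] {ω | τ ω = k}) :
    ∫ ω, (((Finset.Icc 1 (τ ω)).filter (fun l => B l ω = true)).card : ℝ) /
        (1 + (((Finset.Icc 1 (τ ω)).filter (fun l => B l ω = false)).card : ℝ)) ∂μ ≤ 1 := by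
  -- notation
  set Sp : ℕ → Ω → ℕ := fun n ω => ((Finset.Icc 1 n).filter (fun i => B i ω = true)).card
    with hSpdef
  set r : ℕ → ℕ → ℝ := fun j s => (s : ℝ) / (1 + (j : ℝ) - (s : ℝ)) with hrdef
  set ν : Set Ω → ℝ := fun X => (μ X).toReal with hνdef
  -- G k as comap of the explicit count process
  have hGF : ∀ k, G k = MeasurableSpace.comap
      (fun ω => fun j : ℕ => if k ≤ j then Sp j ω else 0)
      (inferInstance : MeasurableSpace (ℕ → ℕ)) := by
    intro k
    rw [hG k]
    congr 1
    funext ω j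
    by_cases hj : k ≤ j
    · simp [hj, hS j ω]; rfl
    · simp [hj]
  have hSpMeas : ∀ n, Measurable (Sp n) := fun n => meas_card B hmeas n
  have hSpSet : ∀ n s, MeasurableSet {ω | Sp n ω = s} :=
    fun n s => (hSpMeas n) (measurableSet_singleton s)
  have hGle : ∀ k, G k ≤ (inferInstance : MeasurableSpace Ω) := by
    intro k
    rw [hGF k]
    apply Measurable.comap_le
    apply measurable_pi_lambda
    intro j
    by_cases hj : k ≤ j
    · simpa [hj] using hSpMeas j
    · simp [hj]
  have hτmeas : ∀ j, MeasurableSet {ω | τ ω = j} := fun j => hGle j _ (hτ j)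
  have hτlemeas : ∀ k, MeasurableSet {ω | τ ω ≤ k} := by
    intro k
    have : {ω | τ ω ≤ k} = ⋃ j ∈ Finset.range (k+1), {ω | τ ω = j} := by
      ext ω
      simp only [Set.mem_setOf_eq, Set.mem_iUnion, Finset.mem_range]
      constructor
      · intro h; exact ⟨τ ω, by omega, rfl⟩
      · rintro ⟨j, hj, h⟩; omega
    rw [this]
    exact MeasurableSet.biUnion (Set.to_countable _) fun j _ => hτmeas j
  -- monotonicity of the reverse filtration
  have hGmono : ∀ n j, n ≤ j → G j ≤ G n := by
    intro n j hnj
    rw [hGF n, hGF j]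
    have hcomp : (fun ω => fun i : ℕ => if j ≤ i then Sp i ω else 0)
        = (fun f : ℕ → ℕ => fun i : ℕ => if j ≤ i then f i else 0)
          ∘ (fun ω => fun i : ℕ => if n ≤ i then Sp i ω else 0) := by
      funext ω i
      by_cases hi : j ≤ i
      · have : n ≤ i := le_trans hnj hi
        simp [hi, this]
      · simp [hi]
    rw [hcomp, ← MeasurableSpace.comap_comp]
    apply MeasurableSpace.comap_mono
    apply Measurable.comap_le
    apply measurable_pi_lambda
    intro i
    by_cases hi : j ≤ i
    · simpa [hi] using measurable_pi_apply i
    · simp [hi]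
  -- {τ ≤ k} is measurable w.r.t. G (k+1)
  have hτgen : ∀ k, MeasurableSet[G (k+1)] {ω | τ ω ≤ k} := by
    intro k
    have hset : {ω | τ ω ≤ k} = (⋃ j ∈ Finset.Icc (k+1) m, {ω | τ ω = j})ᶜ := by
      ext ω
      simp only [Set.mem_setOf_eq, Set.mem_compl_iff, Set.mem_iUnion, Finset.mem_Icc]
      constructor
      · rintro h ⟨j, hj, hje⟩; omega
      · intro h
        by_contra hc
        exact h ⟨τ ω, ⟨by omega, hτle ω⟩, rfl⟩
    rw [hset]
    apply MeasurableSet.compl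
    refine MeasurableSet.biUnion (Set.to_countable _) fun j hj => ?_
    exact hGmono (k+1) j (Finset.mem_Icc.1 hj).1 _ (hτ j)
  -- the key martingale identity, in real numbers
  have hkeyR : ∀ (k s : ℕ), ((k:ℝ)+1) * ν ({ω | τ ω ≤ k} ∩ {ω | Sp (k+1) ω = s}
        ∩ {ω | B (k+1) ω = true})
      = (s:ℝ) * ν ({ω | τ ω ≤ k} ∩ {ω | Sp (k+1) ω = s}) := by
    intro k s
    have hA : MeasurableSet[MeasurableSpace.comap
        (fun ω => fun j : ℕ => if k+1 ≤ j then ((Finset.Icc 1 j).filter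
          (fun i => B i ω = true)).card else 0)
        (inferInstance : MeasurableSpace (ℕ → ℕ))] {ω | τ ω ≤ k} := by
      have := hτgen k
      rwa [hGF (k+1)] at this
    have h := key_count μ B hiid hmeas hber (k+1) (by omega) s {ω | τ ω ≤ k} hA
    have h' := congrArg ENNReal.toReal h
    rw [ENNReal.toReal_mul, ENNReal.toReal_mul, ENNReal.toReal_natCast,
      ENNReal.toReal_natCast] at h'
    push_cast at h' ⊢
    convert h' using 2

  -- measurable events
  have hmjs : ∀ j s, MeasurableSet ({ω | τ ω = j} ∩ {ω | Sp j ω = s}) :=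
    fun j s => (hτmeas j).inter (hSpSet j s)
  have hcardle : ∀ (n : ℕ) (ω : Ω), Sp n ω ≤ n := by
    intro n ω
    calc Sp n ω ≤ (Finset.Icc 1 n).card := Finset.card_filter_le _ _
    _ = n := by rw [Nat.card_Icc]; omega
  have hr0 : ∀ j, r j 0 = 0 := by intro j; simp [hrdef]
  -- integrand as a simple function
  have hrepr : (fun ω => (((Finset.Icc 1 (τ ω)).filter (fun l => B l ω = true)).card : ℝ) /
        (1 + (((Finset.Icc 1 (τ ω)).filter (fun l => B l ω = false)).card : ℝ)))
      = fun ω => ∑ j ∈ Finset.range (m+1), ∑ s ∈ Finset.range (j+1),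
          Set.indicator ({ω' | τ ω' = j} ∩ {ω' | Sp j ω' = s}) (fun _ => r j s) ω := by
    funext ω
    rw [Finset.sum_eq_single_of_mem (τ ω) (Finset.mem_range.2 (by have := hτle ω; omega)) ?_]
    · rw [Finset.sum_eq_single_of_mem (Sp (τ ω) ω)
        (Finset.mem_range.2 (by have := hcardle (τ ω) ω; omega)) ?_]
      · rw [Set.indicator_of_mem (by exact ⟨rfl, rfl⟩)]
        have hfc : ((Finset.Icc 1 (τ ω)).filter (fun l => B l ω = false)).card
            = τ ω - Sp (τ ω) ω := by
          have h1 := Finset.card_filter_add_card_filter_not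
            (s := Finset.Icc 1 (τ ω)) (p := fun l => B l ω = true)
          have h2 : (Finset.Icc 1 (τ ω)).filter (fun l => ¬ (B l ω = true))
              = (Finset.Icc 1 (τ ω)).filter (fun l => B l ω = false) := by
            apply Finset.filter_congr
            intro l _
            simp [Bool.not_eq_true]
          rw [h2, Nat.card_Icc] at h1
          have h3 := hcardle (τ ω) ω
          simp only [hSpdef] at h1 h3 ⊢
          omega
        rw [hfc]
        simp only [hrdef]
        rw [Nat.cast_sub (hcardle (τ ω) ω)]
        ring_nf
        rfl
      · intro s _ hne
        apply Set.indicator_of_notMem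
        rintro ⟨-, h2⟩
        exact hne h2.symm
    · intro j _ hne
      apply Finset.sum_eq_zero
      intro s _
      apply Set.indicator_of_notMem
      rintro ⟨h1, -⟩
      exact hne h1.symm
  have hint : ∫ ω, (((Finset.Icc 1 (τ ω)).filter (fun l => B l ω = true)).card : ℝ) /
        (1 + (((Finset.Icc 1 (τ ω)).filter (fun l => B l ω = false)).card : ℝ)) ∂μ
      = ∑ j ∈ Finset.range (m+1), ∑ s ∈ Finset.range (j+1),
          r j s * ν ({ω | τ ω = j} ∩ {ω | Sp j ω = s}) := by
    rw [hrepr, integral_finset_sum]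
    · refine Finset.sum_congr rfl fun j _ => ?_
      rw [integral_finset_sum]
      · refine Finset.sum_congr rfl fun s _ => ?_
        rw [integral_indicator_const _ (hmjs j s)]
        rw [hνdef]
        simp [smul_eq_mul, mul_comm, measureReal_def]
      · intro s _
        exact (integrable_const _).indicator (hmjs j s)
    · intro j _
      exact integrable_finset_sum _ fun s _ => (integrable_const _).indicator (hmjs j s)
  -- the value process along the (reversed) filtration
  set V : ℕ → ℝ := fun k =>
    (∑ j ∈ Finset.Icc (k+1) m, ∑ s ∈ Finset.range (j+1),
        r j s * ν ({ω | τ ω = j} ∩ {ω | Sp j ω = s}))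
    + ∑ s ∈ Finset.range (k+1), r k s * ν ({ω | τ ω ≤ k} ∩ {ω | Sp k ω = s}) with hVdef
  have hV0 : (∑ j ∈ Finset.range (m+1), ∑ s ∈ Finset.range (j+1),
      r j s * ν ({ω | τ ω = j} ∩ {ω | Sp j ω = s})) = V 0 := by
    simp only [hVdef]
    have h1 : Finset.range (m+1) = insert 0 (Finset.Icc 1 m) := by
      ext x; simp only [Finset.mem_range, Finset.mem_insert, Finset.mem_Icc]; omega
    rw [h1, Finset.sum_insert (by simp [Finset.mem_Icc])]
    have h2 : ∑ s ∈ Finset.range (0+1), r 0 s * ν ({ω | τ ω = 0} ∩ {ω | Sp 0 ω = s}) = 0 := by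
      simp [hr0]
    have h3 : ∑ s ∈ Finset.range (0+1), r 0 s * ν ({ω | τ ω ≤ 0} ∩ {ω | Sp 0 ω = s}) = 0 := by
      simp [hr0]
    rw [h2, h3, zero_add, add_zero]
  have hVm : V m = ∑ s ∈ Finset.range (m+1), r m s * ν {ω | Sp m ω = s} := by
    simp only [hVdef]
    rw [Finset.Icc_eq_empty (by omega), Finset.sum_empty, zero_add]
    refine Finset.sum_congr rfl fun s _ => ?_
    congr 2
    exact Set.inter_eq_right.2 fun ω _ => hτle ω
  -- additivity of ν
  have hνadd : ∀ X Y : Set Ω, MeasurableSet Y → Disjoint X Y → ν (X ∪ Y) = ν X + ν Y := by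
    intro X Y hY hXY
    simp only [hνdef]
    rw [measure_union hXY hY, ENNReal.toReal_add (measure_ne_top μ X) (measure_ne_top μ Y)]
  -- one-step supermartingale inequality
  have hstep : ∀ k, k < m → V k ≤ V (k+1) := by
    intro k hk
    simp only [hVdef]
    have hIcc : Finset.Icc (k+1) m = insert (k+1) (Finset.Icc (k+1+1) m) := by
      ext x; simp only [Finset.mem_Icc, Finset.mem_insert]; omega
    rw [hIcc, Finset.sum_insert (by simp [Finset.mem_Icc])]
    have hsplit : ∀ s, ν ({ω | τ ω ≤ k+1} ∩ {ω | Sp (k+1) ω = s})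
        = ν ({ω | τ ω ≤ k} ∩ {ω | Sp (k+1) ω = s})
          + ν ({ω | τ ω = k+1} ∩ {ω | Sp (k+1) ω = s}) := by
      intro s
      rw [← hνadd _ _ ((hτmeas (k+1)).inter (hSpSet (k+1) s)) ?_]
      · congr 1
        ext ω
        simp only [Set.mem_union, Set.mem_inter_iff, Set.mem_setOf_eq]
        constructor
        · rintro ⟨h1, h2⟩
          rcases Nat.lt_or_ge (τ ω) (k+1) with h | h
          · exact Or.inl ⟨by omega, h2⟩
          · exact Or.inr ⟨by omega, h2⟩
        · rintro (⟨h1, h2⟩ | ⟨h1, h2⟩) <;> exact ⟨by omega, h2⟩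
      · apply Set.disjoint_left.2
        rintro ω ⟨h1, -⟩ ⟨h2, -⟩
        simp only [Set.mem_setOf_eq] at h1 h2
        omega
    have hsum2 : ∑ s ∈ Finset.range (k+1+1), r (k+1) s * ν ({ω | τ ω ≤ k+1} ∩ {ω | Sp (k+1) ω = s})
        = (∑ s ∈ Finset.range (k+1+1), r (k+1) s * ν ({ω | τ ω ≤ k} ∩ {ω | Sp (k+1) ω = s}))
          + ∑ s ∈ Finset.range (k+1+1), r (k+1) s * ν ({ω | τ ω = k+1} ∩ {ω | Sp (k+1) ω = s}) := by
      rw [← Finset.sum_add_distrib]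
      refine Finset.sum_congr rfl fun s _ => ?_
      rw [hsplit s]; ring
    rw [hsum2]
    have hmain : ∑ s ∈ Finset.range (k+1), r k s * ν ({ω | τ ω ≤ k} ∩ {ω | Sp k ω = s})
        ≤ ∑ s ∈ Finset.range (k+1+1), r (k+1) s * ν ({ω | τ ω ≤ k} ∩ {ω | Sp (k+1) ω = s}) := by
      have hBsett : MeasurableSet {ω | B (k+1) ω = true} :=
        (hmeas (k+1)) (measurableSet_singleton true)
      have hBsetf : MeasurableSet {ω | B (k+1) ω = false} :=
        (hmeas (k+1)) (measurableSet_singleton false)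
      set a : ℕ → ℝ := fun s =>
        ν ({ω | τ ω ≤ k} ∩ {ω | Sp (k+1) ω = s} ∩ {ω | B (k+1) ω = true}) with hadef
      set b : ℕ → ℝ := fun s =>
        ν ({ω | τ ω ≤ k} ∩ {ω | Sp (k+1) ω = s} ∩ {ω | B (k+1) ω = false}) with hbdef
      have hanneg : ∀ s, 0 ≤ a s := fun s => ENNReal.toReal_nonneg
      have hbnneg : ∀ s, 0 ≤ b s := fun s => ENNReal.toReal_nonneg
      have hab : ∀ s, ν ({ω | τ ω ≤ k} ∩ {ω | Sp (k+1) ω = s}) = a s + b s := by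
        intro s
        simp only [hadef, hbdef]
        rw [← hνadd _ _ (((hτlemeas k).inter (hSpSet (k+1) s)).inter hBsetf) ?_]
        · congr 1
          ext ω
          simp only [Set.mem_union, Set.mem_inter_iff, Set.mem_setOf_eq]
          constructor
          · rintro ⟨h1, h2⟩
            cases hBv : B (k+1) ω
            · exact Or.inr ⟨⟨h1, h2⟩, rfl⟩
            · exact Or.inl ⟨⟨h1, h2⟩, rfl⟩
          · rintro (⟨⟨h1, h2⟩, -⟩ | ⟨⟨h1, h2⟩, -⟩) <;> exact ⟨h1, h2⟩
        · apply Set.disjoint_left.2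
          rintro ω ⟨-, h1⟩ ⟨-, h2⟩
          simp only [Set.mem_setOf_eq] at h1 h2
          rw [h1] at h2
          exact Bool.noConfusion h2
      have hkey : ∀ s, ((k:ℝ)+1) * a s = (s:ℝ) * (a s + b s) := by
        intro s
        rw [← hab s]
        simp only [hadef]
        exact hkeyR k s
      have hSp1 : ∀ ω, Sp (k+1) ω = Sp k ω + (if B (k+1) ω = true then 1 else 0) := by
        intro ω
        simp only [hSpdef]
        have h1 : Finset.Icc 1 (k+1) = insert (k+1) (Finset.Icc 1 k) := by
          ext x; simp only [Finset.mem_Icc, Finset.mem_insert]; omega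
        rw [h1, Finset.filter_insert]
        by_cases hBv : B (k+1) ω = true
        · rw [if_pos hBv, if_pos hBv, Finset.card_insert_of_notMem (fun hc => by
            have := Finset.filter_subset (fun i => B i ω = true) (Finset.Icc 1 k) hc
            simp [Finset.mem_Icc] at this)]
        · rw [if_neg hBv, if_neg hBv]
          omega
      have habk : ∀ s, ν ({ω | τ ω ≤ k} ∩ {ω | Sp k ω = s}) = a (s+1) + b s := by
        intro s
        simp only [hadef, hbdef]
        rw [← hνadd _ _ (((hτlemeas k).inter (hSpSet (k+1) s)).inter hBsetf) ?_]
        · congr 1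
          ext ω
          simp only [Set.mem_union, Set.mem_inter_iff, Set.mem_setOf_eq]
          have hsp := hSp1 ω
          constructor
          · rintro ⟨h1, h2⟩
            cases hBv : B (k+1) ω
            · have h4 : Sp (k+1) ω = Sp k ω := by rw [hsp, hBv]; simp
              exact Or.inr ⟨⟨h1, by omega⟩, rfl⟩
            · have h4 : Sp (k+1) ω = Sp k ω + 1 := by rw [hsp, hBv]; simp
              exact Or.inl ⟨⟨h1, by omega⟩, rfl⟩
          · rintro (⟨⟨h1, h2⟩, h3⟩ | ⟨⟨h1, h2⟩, h3⟩)
            · have h4 : Sp (k+1) ω = Sp k ω + 1 := by rw [hsp, h3]; simp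
              exact ⟨h1, by omega⟩
            · have h4 : Sp (k+1) ω = Sp k ω := by rw [hsp, h3]; simp
              exact ⟨h1, by omega⟩
        · apply Set.disjoint_left.2
          rintro ω ⟨-, h1⟩ ⟨-, h2⟩
          simp only [Set.mem_setOf_eq] at h1 h2
          rw [h1] at h2
          exact Bool.noConfusion h2
      have hb1 : ∀ s, ((k:ℝ)+1) * b s = ((k:ℝ)+1-(s:ℝ)) * (a s + b s) := by
        intro s
        linear_combination (-1 : ℝ) * hkey s
      have hbtop : b (k+1) = 0 := by
        have h := hkey (k+1)
        push_cast at h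
        have h2 : ((k:ℝ)+1) * b (k+1) = 0 := by linear_combination -h
        have h3 : ((k:ℝ)+1) ≠ 0 := by positivity
        rcases mul_eq_zero.1 h2 with h4 | h4
        · exact absurd h4 h3
        · exact h4
      -- rewrite the left sum
      have hT1 : ∑ s ∈ Finset.range (k+1+1), (if s = 0 then (0:ℝ) else r k (s-1) * a s)
          = ∑ s ∈ Finset.range (k+1), r k s * a (s+1) := by
        rw [Finset.sum_range_succ']
        simp [Nat.add_sub_cancel]
      have hT2 : ∑ s ∈ Finset.range (k+1+1), r k s * b s
          = ∑ s ∈ Finset.range (k+1), r k s * b s := by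
        rw [Finset.sum_range_succ, hbtop, mul_zero, add_zero]
      have hLHS : ∑ s ∈ Finset.range (k+1), r k s * ν ({ω | τ ω ≤ k} ∩ {ω | Sp k ω = s})
          = ∑ s ∈ Finset.range (k+1+1),
              ((if s = 0 then (0:ℝ) else r k (s-1) * a s) + r k s * b s) := by
        rw [Finset.sum_add_distrib, hT1, hT2, ← Finset.sum_add_distrib]
        refine Finset.sum_congr rfl fun s _ => ?_
        rw [habk s]; ring
      rw [hLHS]
      refine Finset.sum_le_sum fun s hs => ?_
      rw [Finset.mem_range] at hs
      rw [hab s]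
      rcases Nat.eq_zero_or_pos s with rfl | hspos
      · have h := hkey 0
        rw [Nat.cast_zero, zero_mul] at h
        have hkne : ((k:ℝ)+1) ≠ 0 := by positivity
        have h0 : a 0 = 0 := (mul_eq_zero.1 h).resolve_left hkne
        simp [hr0, h0]
      · rcases Nat.lt_or_ge s (k+1) with hsk | hsk
        · -- 1 ≤ s ≤ k : exact equality
          have hne : s ≠ 0 := by omega
          rw [if_neg hne]
          apply le_of_eq
          have hkey' := hkey s
          have hb1' := hb1 s
          set p : ℝ := a s + b s with hp
          have hkne : ((k:ℝ)+1) ≠ 0 := by positivity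
          have hA : a s = (s:ℝ) * p / ((k:ℝ)+1) := by
            field_simp
            linear_combination hkey'
          have hB : b s = (((k:ℝ)+1)-(s:ℝ)) * p / ((k:ℝ)+1) := by
            field_simp
            linear_combination hb1'
          have hsle : (s:ℝ) ≤ (k:ℝ) := by exact_mod_cast Nat.lt_succ_iff.1 hsk
          have hs1 : (1:ℝ) ≤ (s:ℝ) := by exact_mod_cast hspos
          have hcast : ((s-1:ℕ):ℝ) = (s:ℝ)-1 := by
            rw [Nat.cast_sub hspos, Nat.cast_one]
          simp only [hrdef]
          rw [hcast, hA, hB]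
          push_cast
          have hd1 : (1:ℝ) + (k:ℝ) - ((s:ℝ)-1) ≠ 0 := by
            intro h; nlinarith
          have hd2 : (1:ℝ) + (k:ℝ) - (s:ℝ) ≠ 0 := by
            intro h; nlinarith
          have hd3 : (1:ℝ) + ((k:ℝ)+1) - (s:ℝ) ≠ 0 := by
            intro h; nlinarith
          field_simp
          ring
        · -- s = k+1
          have hseq : s = k+1 := by omega
          subst hseq
          rw [if_neg (by omega)]
          rw [hbtop, mul_zero, add_zero, add_zero]
          have hrk : r k (k+1-1) = (k:ℝ) := by
            simp only [hrdef, Nat.add_sub_cancel]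
            rw [add_sub_cancel_right, div_one]
          have hrk1 : r (k+1) (k+1) = (k:ℝ)+1 := by
            simp only [hrdef]
            rw [add_sub_cancel_right, div_one]
            push_cast
            ring
          rw [hrk, hrk1]
          nlinarith [hanneg (k+1)]
    linarith [hmain]
  -- the final expectation is at most one
  have hfin : ∑ s ∈ Finset.range (m+1), r m s * ν {ω | Sp m ω = s} ≤ 1 := by
    have hν : ∀ s, ν {ω | Sp m ω = s} = (Nat.choose m s : ℝ) * ((2:ℝ)⁻¹)^m := by
      intro s
      simp only [hνdef, hSpdef]
      rw [level_measure μ B hiid hmeas hber m s]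
      rw [ENNReal.toReal_mul, ENNReal.toReal_pow, ENNReal.toReal_inv, ENNReal.toReal_natCast,
        ENNReal.toReal_ofNat]
    rw [Finset.sum_congr rfl fun s _ => by rw [hν s]]
    have hfactor : ∑ s ∈ Finset.range (m+1), r m s * ((Nat.choose m s : ℝ) * (2⁻¹)^m)
        = (∑ s ∈ Finset.range (m+1), r m s * (Nat.choose m s : ℝ)) * ((2:ℝ)⁻¹)^m := by
      rw [Finset.sum_mul]
      refine Finset.sum_congr rfl fun s _ => by ring
    rw [hfactor]
    have hsumle : ∑ s ∈ Finset.range (m+1), r m s * (Nat.choose m s : ℝ) ≤ (2:ℝ)^m := by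
      rw [Finset.sum_range_succ']
      simp only [hr0, zero_mul, add_zero]
      have hterm : ∀ i ∈ Finset.range m,
          r m (i+1) * (Nat.choose m (i+1) : ℝ) = (Nat.choose m i : ℝ) := by
        intro i hi
        rw [Finset.mem_range] at hi
        have hid := Nat.choose_succ_right_eq m i
        have hidR : ((Nat.choose m (i+1) : ℝ)) * ((i:ℝ)+1)
            = (Nat.choose m i : ℝ) * ((m:ℝ) - (i:ℝ)) := by
          have h := congrArg (Nat.cast (R := ℝ)) hid
          push_cast [Nat.cast_sub (le_of_lt hi)] at h
          linarith [h]
        simp only [hrdef]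
        push_cast
        have hd : (1:ℝ) + (m:ℝ) - ((i:ℝ)+1) ≠ 0 := by
          have : (i:ℝ)+1 ≤ (m:ℝ) := by exact_mod_cast hi
          intro h; nlinarith
        field_simp
        linear_combination hidR
      rw [Finset.sum_congr rfl hterm]
      have hle : (∑ i ∈ Finset.range m, (Nat.choose m i : ℝ))
          ≤ ∑ i ∈ Finset.range (m+1), (Nat.choose m i : ℝ) :=
        Finset.sum_le_sum_of_subset_of_nonneg (Finset.range_subset_range.2 (by omega))
          (fun i _ _ => by positivity)
      have h2 : (∑ i ∈ Finset.range (m+1), (Nat.choose m i : ℝ)) = (2:ℝ)^m := by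
        rw [← Nat.cast_sum, Nat.sum_range_choose]
        push_cast
        ring
      linarith
    have h2pos : (0:ℝ) ≤ ((2:ℝ)⁻¹)^m := by positivity
    calc (∑ s ∈ Finset.range (m+1), r m s * (Nat.choose m s : ℝ)) * ((2:ℝ)⁻¹)^m
        ≤ (2:ℝ)^m * ((2:ℝ)⁻¹)^m := mul_le_mul_of_nonneg_right hsumle h2pos
      _ = 1 := by rw [← mul_pow]; norm_num
  -- chain everything together
  have hchain : ∀ k, k ≤ m → V 0 ≤ V k := by
    intro k
    induction k with
    | zero => intro _; exact le_refl _
    | succ k ih => intro hk; exact le_trans (ih (by omega)) (hstep k (by omega))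
  rw [hint, hV0]
  calc V 0 ≤ V m := hchain m le_rfl
    _ = ∑ s ∈ Finset.range (m+1), r m s * ν {ω | Sp m ω = s} := hVm
    _ ≤ 1 := hfin

end MainProof
end

section
/- Let B₁, …, B_m be i.i.d. Bernoulli(1/2) random variables (taking values in {0,1}) and set S = B₁ + ⋯ + B_m. Then E[ S / (1 + m − S) ] ≤ 1. -/
open scoped Classical
open MeasureTheory ProbabilityTheory

theorem bernoulli_ratio_expectation
    {Ω : Type*} [MeasurableSpace Ω] (μ : Measure Ω) [IsProbabilityMeasure μ]
    (m : ℕ) (B : Fin m → Ω → ℕ) (hmeas : ∀ l, Measurable (B l))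
    (hval : ∀ l ω, B l ω = 0 ∨ B l ω = 1)
    (hiid : iIndepFun B μ)
    (hber : ∀ l, μ {ω | B l ω = 1} = 1/2)
    (S : Ω → ℕ) (hS : ∀ ω, S ω = ∑ l : Fin m, B l ω) :
    ∫ ω, (S ω : ℝ) / (1 + (m : ℝ) - (S ω : ℝ)) ∂μ ≤ 1 := by
  classical
  -- T l : sum of all B j for j ≠ l
  set T : Fin m → Ω → ℕ := fun l ω => ∑ j ∈ Finset.univ.erase l, B j ω with hT
  have hmeasS : Measurable S := by
    have : Measurable fun ω => ∑ l : Fin m, B l ω :=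
      Finset.measurable_sum _ fun l _ => hmeas l
    simpa [funext hS] using this
  have hmeasT : ∀ l, Measurable (T l) :=
    fun l => Finset.measurable_sum _ fun j _ => hmeas j
  have hsplit : ∀ l ω, S ω = B l ω + T l ω := by
    intro l ω
    rw [hS, hT]
    exact (Finset.add_sum_erase _ _ (Finset.mem_univ l)).symm
  have hBle : ∀ l ω, B l ω ≤ 1 := by
    intro l ω; rcases hval l ω with h | h <;> simp [h]
  have hTlt : ∀ l ω, T l ω < m := by
    intro l ω
    calc T l ω ≤ ∑ j ∈ Finset.univ.erase l, 1 :=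
          Finset.sum_le_sum fun j _ => hBle j ω
      _ = (Finset.univ.erase l).card := by simp
      _ < m := by
          rw [Finset.card_erase_of_mem (Finset.mem_univ l)]
          simpa using Nat.sub_lt (Nat.pos_of_ne_zero (by rintro rfl; exact (Nat.not_lt_zero _ l.2))) one_pos
  have hSle : ∀ ω, S ω ≤ m := by
    intro ω
    rcases Nat.eq_zero_or_pos m with hm | hm
    · subst hm; simp [hS]
    · obtain ⟨l, _⟩ : Nonempty (Fin m) := ⟨⟨0, hm⟩⟩
      · rw [hsplit ⟨0, hm⟩ ω]
        have := hTlt ⟨0, hm⟩ ω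
        have := hBle ⟨0, hm⟩ ω
        omega
  -- g l ω = 1/(m - T l ω), a value in (0,1]
  set g : Fin m → Ω → ℝ := fun l ω => 1 / ((m : ℝ) - (T l ω : ℝ)) with hg
  have hg_meas : ∀ l, Measurable (g l) := by
    intro l
    have : Measurable fun ω => ((T l ω : ℝ)) := measurable_from_top.comp (hmeasT l)
    exact measurable_const.div (measurable_const.sub this)
  -- cast measurability helpers
  have hcastB : ∀ l, Measurable fun ω => ((B l ω : ℝ)) :=
    fun l => measurable_from_top.comp (hmeas l)
  have hcastS : Measurable fun ω => ((S ω : ℝ)) := measurable_from_top.comp hmeasS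
  -- the two families of integrands
  set F : Fin m → Ω → ℝ := fun l ω => (B l ω : ℝ) / (1 + (m : ℝ) - (S ω : ℝ)) with hF
  set G : Fin m → Ω → ℝ := fun l ω => (1 - (B l ω : ℝ)) / ((m : ℝ) - (S ω : ℝ)) with hG
  have hF_meas : ∀ l, Measurable (F l) :=
    fun l => (hcastB l).div ((measurable_const.sub hcastS))
  have hG_meas : ∀ l, Measurable (G l) :=
    fun l => (measurable_const.sub (hcastB l)).div (measurable_const.sub hcastS)
  -- indicator functions of B l = 1 and B l = 0
  set I1 : Fin m → Ω → ℝ := fun l ω => if B l ω = 1 then 1 else 0 with hI1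
  set I0 : Fin m → Ω → ℝ := fun l ω => if B l ω = 0 then 1 else 0 with hI0
  -- pointwise factorizations
  have hTcast : ∀ l ω, ((T l ω : ℝ)) ≤ (m : ℝ) - 1 := by
    intro l ω
    have := hTlt l ω
    have : (T l ω : ℝ) + 1 ≤ (m : ℝ) := by exact_mod_cast this
    linarith
  have hFfact : ∀ l ω, F l ω = g l ω * I1 l ω := by
    intro l ω
    rcases hval l ω with h | h
    · simp [hF, hI1, h]
    · have hs := hsplit l ω
      have : (S ω : ℝ) = 1 + (T l ω : ℝ) := by rw [hs, h]; push_cast; ring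
      simp only [hF, hI1, hg, h, this, if_pos rfl]
      rw [Nat.cast_one]
      ring_nf
      simp
  have hGfact : ∀ l ω, G l ω = g l ω * I0 l ω := by
    intro l ω
    rcases hval l ω with h | h
    · have hs := hsplit l ω
      have : (S ω : ℝ) = (T l ω : ℝ) := by rw [hs, h]; push_cast; ring
      simp only [hG, hI0, hg, h, this, if_pos rfl]
      rw [Nat.cast_zero]
      ring_nf
      simp
    · simp [hG, hI0, h]
  -- independence of g l with I1 l / I0 l
  have hind : ∀ l, IndepFun (T l) (B l) μ := by
    intro l
    have h := hiid.indepFun_finset_sum_of_notMem hmeas (Finset.notMem_erase l Finset.univ)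
    have : T l = ∑ j ∈ Finset.univ.erase l, B j := by
      funext ω; simp [hT, Finset.sum_apply]
    rw [this]
    exact h
  have hind1 : ∀ l, IndepFun (g l) (I1 l) μ := by
    intro l
    have := (hind l).comp (φ := fun t : ℕ => 1 / ((m : ℝ) - (t : ℝ)))
      (ψ := fun n : ℕ => if n = 1 then (1 : ℝ) else 0) measurable_from_top measurable_from_top
    exact this
  have hind0 : ∀ l, IndepFun (g l) (I0 l) μ := by
    intro l
    have := (hind l).comp (φ := fun t : ℕ => 1 / ((m : ℝ) - (t : ℝ)))
      (ψ := fun n : ℕ => if n = 0 then (1 : ℝ) else 0) measurable_from_top measurable_from_top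
    exact this
  -- integrals of indicators
  have hset1 : ∀ l, MeasurableSet {ω | B l ω = 1} := fun l => hmeas l (measurableSet_singleton 1)
  have hmI1 : ∀ l, Measurable (I1 l) := by
    intro l
    have : I1 l = (fun n : ℕ => if n = 1 then (1 : ℝ) else 0) ∘ B l := rfl
    rw [this]; exact measurable_from_top.comp (hmeas l)
  have hmI0 : ∀ l, Measurable (I0 l) := by
    intro l
    have : I0 l = (fun n : ℕ => if n = 0 then (1 : ℝ) else 0) ∘ B l := rfl
    rw [this]; exact measurable_from_top.comp (hmeas l)
  have hI1int : ∀ l, ∫ ω, I1 l ω ∂μ = 1 / 2 := by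
    intro l
    have : (fun ω => I1 l ω) = Set.indicator {ω | B l ω = 1} (fun _ => (1 : ℝ)) := by
      funext ω; by_cases h : B l ω = 1 <;> simp [hI1, h, Set.indicator]
    rw [this, integral_indicator_const _ (hset1 l), measureReal_def, hber l]
    simp [ENNReal.toReal_div]
  have hI0int : ∀ l, ∫ ω, I0 l ω ∂μ = 1 / 2 := by
    intro l
    have hcompl : {ω | B l ω = 0} = {ω | B l ω = 1}ᶜ := by
      ext ω; rcases hval l ω with h | h <;> simp [h]
    have hm0 : μ {ω | B l ω = 0} = 1 / 2 := by
      rw [hcompl, measure_compl (hset1 l) (measure_ne_top μ _), hber l, measure_univ]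
      exact ENNReal.sub_half ENNReal.one_ne_top
    have : (fun ω => I0 l ω) = Set.indicator {ω | B l ω = 0} (fun _ => (1 : ℝ)) := by
      funext ω; by_cases h : B l ω = 0 <;> simp [hI0, h, Set.indicator]
    have hset0 : MeasurableSet {ω | B l ω = 0} := hmeas l (measurableSet_singleton 0)
    rw [this, integral_indicator_const _ hset0, measureReal_def, hm0]
    simp [ENNReal.toReal_div]
  -- key identity: ∫ F l = ∫ G l
  have hkey : ∀ l, ∫ ω, F l ω ∂μ = ∫ ω, G l ω ∂μ := by
    intro l
    calc ∫ ω, F l ω ∂μ = ∫ ω, g l ω * I1 l ω ∂μ := by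
            exact integral_congr_ae (ae_of_all _ fun ω => hFfact l ω)
      _ = (∫ ω, g l ω ∂μ) * ∫ ω, I1 l ω ∂μ :=
            (hind1 l).integral_fun_mul_eq_mul_integral (hg_meas l).aestronglyMeasurable
              (hmI1 l).aestronglyMeasurable
      _ = (∫ ω, g l ω ∂μ) * ∫ ω, I0 l ω ∂μ := by rw [hI1int l, hI0int l]
      _ = ∫ ω, g l ω * I0 l ω ∂μ :=
            ((hind0 l).integral_fun_mul_eq_mul_integral (hg_meas l).aestronglyMeasurable
              (hmI0 l).aestronglyMeasurable).symm
      _ = ∫ ω, G l ω ∂μ := integral_congr_ae (ae_of_all _ fun ω => (hGfact l ω).symm)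
  -- bounds and integrability
  have hFbound : ∀ l ω, ‖F l ω‖ ≤ 1 := by
    intro l ω
    rcases hval l ω with h | h
    · simp [hF, h]
    · have hs := hsplit l ω
      have heq : 1 + (m : ℝ) - (S ω : ℝ) = (m : ℝ) - (T l ω : ℝ) := by
        rw [hs, h]; push_cast; ring
      have h1 : (1 : ℝ) ≤ (m : ℝ) - (T l ω : ℝ) := by have := hTcast l ω; linarith
      rw [hF]
      simp only [h, Nat.cast_one, heq, Real.norm_eq_abs]
      rw [abs_of_nonneg (by positivity)]
      rw [div_le_one (by linarith)]
      linarith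
  have hGbound : ∀ l ω, ‖G l ω‖ ≤ 1 := by
    intro l ω
    rcases hval l ω with h | h
    · have hs := hsplit l ω
      have heq : (m : ℝ) - (S ω : ℝ) = (m : ℝ) - (T l ω : ℝ) := by
        rw [hs, h]; push_cast; ring
      have h1 : (1 : ℝ) ≤ (m : ℝ) - (T l ω : ℝ) := by have := hTcast l ω; linarith
      rw [hG]
      simp only [h, Nat.cast_zero, heq, Real.norm_eq_abs, sub_zero]
      rw [abs_of_nonneg (by positivity)]
      rw [div_le_one (by linarith)]
      linarith
    · simp [hG, h]
  have hFint : ∀ l, Integrable (F l) μ := fun l =>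
    (integrable_const 1).mono' (hF_meas l).aestronglyMeasurable (ae_of_all _ (hFbound l))
  have hGint : ∀ l, Integrable (G l) μ := fun l =>
    (integrable_const 1).mono' (hG_meas l).aestronglyMeasurable (ae_of_all _ (hGbound l))
  -- pointwise decomposition of the target integrand
  have hdecomp : ∀ ω, (S ω : ℝ) / (1 + (m : ℝ) - (S ω : ℝ)) = ∑ l : Fin m, F l ω := by
    intro ω
    have hc : (S ω : ℝ) = ∑ l : Fin m, (B l ω : ℝ) := by rw [hS]; push_cast; ring
    simp only [hF]
    rw [hc, Finset.sum_div]
  -- sum of G's is at most 1 pointwise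
  have hGsum : ∀ ω, ∑ l : Fin m, G l ω ≤ 1 := by
    intro ω
    have hsum : ∑ l : Fin m, (1 - (B l ω : ℝ)) = (m : ℝ) - (S ω : ℝ) := by
      rw [hS]
      push_cast
      rw [Finset.sum_sub_distrib]
      simp
    have : ∑ l : Fin m, G l ω = ((m : ℝ) - (S ω : ℝ)) / ((m : ℝ) - (S ω : ℝ)) := by
      rw [hG]
      simp only
      rw [← Finset.sum_div, hsum]
    rw [this]
    rcases eq_or_ne ((m : ℝ) - (S ω : ℝ)) 0 with h | h
    · simp [h]
    · rw [div_self h]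
  -- put everything together
  calc ∫ ω, (S ω : ℝ) / (1 + (m : ℝ) - (S ω : ℝ)) ∂μ
      = ∫ ω, ∑ l : Fin m, F l ω ∂μ := integral_congr_ae (ae_of_all _ hdecomp)
    _ = ∑ l : Fin m, ∫ ω, F l ω ∂μ := integral_finset_sum _ fun l _ => hFint l
    _ = ∑ l : Fin m, ∫ ω, G l ω ∂μ := Finset.sum_congr rfl fun l _ => hkey l
    _ = ∫ ω, ∑ l : Fin m, G l ω ∂μ := (integral_finset_sum _ fun l _ => hGint l).symm
    _ ≤ ∫ _, (1 : ℝ) ∂μ := by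
        refine integral_mono (integrable_finset_sum _ fun l _ => hGint l) (integrable_const 1) ?_
        intro ω
        exact hGsum ω
    _ = 1 := by simp
end
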